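/- arXiv:2308.02264 — 3 statements merged into one kernel-verified Lean document; each statement's English description precedes it below -/
import Mathlib

section
/- Let b, c ∈ C[0,1] with b(x) ≥ β > 0, c(x) ≥ 0 and c(x) − b′(x) ≥ 0 for all x ∈ [0,1]. Define the operator (Av)(x) := ε v′(x) + b(x)v(x) + ∫_x^1 c(s)v(s) ds for v ∈ W₀^{1,∞}(0,1) and ε > 0. Then for every v ∈ W₀^{1,∞}(0,1) and every constant κ ∈ ℝ, ‖v‖_∞ ≤ (2/β) ‖Av + κ‖_∞. -/
open Set MeasureTheory Filter intervalIntegral Topology BoundedContinuousFunction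

lemma seq_tendsto_slope {g : ℝ → ℝ} {c L : ℝ} (hg : HasDerivAt g L c) :
    Tendsto (fun n : ℕ => (g (c + ((n : ℝ) + 1)⁻¹) - g c) * ((n : ℝ) + 1)) atTop (𝓝 L) := by
  rw [hasDerivAt_iff_tendsto_slope] at hg
  have hseq : Tendsto (fun n : ℕ => c + ((n : ℝ) + 1)⁻¹) atTop (𝓝[≠] c) := by
    refine tendsto_nhdsWithin_iff.2 ⟨?_, ?_⟩
    · have : Tendsto (fun n : ℕ => ((n : ℝ) + 1)⁻¹) atTop (𝓝 0) :=
        tendsto_one_div_add_atTop_nhds_zero_nat.congr (by simp [one_div])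
      simpa using tendsto_const_nhds.add this
    · filter_upwards with n
      have : (0:ℝ) < ((n : ℝ) + 1)⁻¹ := by positivity
      simp only [mem_compl_iff, mem_singleton_iff]
      intro h
      nlinarith [this]
  have := hg.comp hseq
  refine this.congr fun n => ?_
  have hne : ((n : ℝ) + 1) ≠ 0 := by positivity
  simp only [Function.comp, slope, vsub_eq_sub, add_sub_cancel_left, smul_eq_mul, inv_inv]
  ring

lemma ftc_ae_deriv (f f' : ℝ → ℝ) (K : NNReal) (hf : LipschitzWith K f)
    {a b : ℝ} (hab : a ≤ b)
    (hd : ∀ᵐ x ∂(volume.restrict (Ioo a b)), HasDerivAt f (f' x) x) :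
    IntervalIntegrable f' volume a b ∧ ∫ x in a..b, f' x = f b - f a := by
  have hcont : Continuous f := hf.continuous
  set μ := volume.restrict (Ioo a b) with hμ
  haveI : IsFiniteMeasure μ := by
    constructor
    rw [hμ, Measure.restrict_apply_univ]
    exact measure_Ioo_lt_top
  set F : ℕ → ℝ → ℝ := fun n x => (f (x + ((n : ℝ) + 1)⁻¹) - f x) * ((n : ℝ) + 1) with hF
  have hFcont : ∀ n, Continuous (F n) := by
    intro n
    exact (((hcont.comp (continuous_id.add continuous_const)).sub hcont).mul continuous_const)
  have hboundpt : ∀ n x, ‖F n x‖ ≤ (K : ℝ) := by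
    intro n x
    have h1 : |f (x + ((n : ℝ) + 1)⁻¹) - f x| ≤ (K : ℝ) * ((n : ℝ) + 1)⁻¹ := by
      have := hf.dist_le_mul (x + ((n : ℝ) + 1)⁻¹) x
      rw [Real.dist_eq, Real.dist_eq] at this
      have e : x + ((n : ℝ) + 1)⁻¹ - x = ((n : ℝ) + 1)⁻¹ := by ring
      rw [e, abs_of_nonneg (by positivity : (0:ℝ) ≤ ((n : ℝ) + 1)⁻¹)] at this
      exact this
    have hpos : (0:ℝ) < (n : ℝ) + 1 := by positivity
    have : ‖F n x‖ = |f (x + ((n : ℝ) + 1)⁻¹) - f x| * ((n : ℝ) + 1) := by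
      rw [hF]; simp [abs_mul, abs_of_nonneg hpos.le]
    rw [this]
    calc |f (x + ((n : ℝ) + 1)⁻¹) - f x| * ((n : ℝ) + 1)
        ≤ ((K : ℝ) * ((n : ℝ) + 1)⁻¹) * ((n : ℝ) + 1) := by
          exact mul_le_mul_of_nonneg_right h1 hpos.le
      _ = (K : ℝ) := by field_simp
  have hbound : ∀ n, ∀ᵐ x ∂μ, ‖F n x‖ ≤ (K : ℝ) := fun n => ae_of_all _ (hboundpt n)
  have hlim : ∀ᵐ x ∂μ, Tendsto (fun n => F n x) atTop (𝓝 (f' x)) := by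
    filter_upwards [hd] with x hx
    exact seq_tendsto_slope hx
  have hDCT := tendsto_integral_of_dominated_convergence (fun _ => (K : ℝ))
      (fun n => (hFcont n).aestronglyMeasurable) (integrable_const _) hbound hlim
  -- compute ∫ F n dμ
  have hInt : ∀ n, ∫ x, F n x ∂μ
      = (∫ x in b..(b + ((n : ℝ) + 1)⁻¹), f x) * ((n : ℝ) + 1)
        - (∫ x in a..(a + ((n : ℝ) + 1)⁻¹), f x) * ((n : ℝ) + 1) := by
    intro n
    set h : ℝ := ((n : ℝ) + 1)⁻¹ with hh
    have hhpos : (0:ℝ) < h := by positivity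
    have I1 : IntervalIntegrable (fun x => f (x + h)) volume a b :=
      ((hcont.comp (continuous_id.add continuous_const))).intervalIntegrable _ _
    have I2 : IntervalIntegrable f volume a b := hcont.intervalIntegrable _ _
    have e1 : ∫ x, F n x ∂μ = ∫ x in a..b, F n x := by
      rw [intervalIntegral.integral_of_le hab, hμ, ← integral_Ioc_eq_integral_Ioo]
    rw [e1]
    have e2 : ∫ x in a..b, F n x
        = ((∫ x in a..b, f (x + h)) - ∫ x in a..b, f x) * ((n : ℝ) + 1) := by
      rw [← intervalIntegral.integral_sub I1 I2, ← intervalIntegral.integral_mul_const]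
    rw [e2]
    have e3 : (∫ x in a..b, f (x + h)) = ∫ x in (a+h)..(b+h), f x :=
      intervalIntegral.integral_comp_add_right f h
    have I3 : IntervalIntegrable f volume b (b + h) := hcont.intervalIntegrable _ _
    have I4 : IntervalIntegrable f volume a (a + h) := hcont.intervalIntegrable _ _
    have I5 : IntervalIntegrable f volume (a+h) (b+h) := hcont.intervalIntegrable _ _
    have e4 : (∫ x in a..(a+h), f x) + (∫ x in (a+h)..(b+h), f x)
        = (∫ x in a..b, f x) + ∫ x in b..(b+h), f x := by
      rw [intervalIntegral.integral_add_adjacent_intervals I4 I5,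
        intervalIntegral.integral_add_adjacent_intervals I2 I3]
    have : (∫ x in (a+h)..(b+h), f x) - (∫ x in a..b, f x)
        = (∫ x in b..(b+h), f x) - ∫ x in a..(a+h), f x := by linarith
    rw [e3, this]; ring
  -- limits of boundary terms
  have hb' : Tendsto (fun n : ℕ => (∫ x in b..(b + ((n : ℝ) + 1)⁻¹), f x) * ((n : ℝ) + 1))
      atTop (𝓝 (f b)) := by
    have hG : HasDerivAt (fun u => ∫ x in b..u, f x) (f b) b :=
      (hcont.integral_hasStrictDerivAt b b).hasDerivAt
    have := seq_tendsto_slope hG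
    simpa using this
  have ha' : Tendsto (fun n : ℕ => (∫ x in a..(a + ((n : ℝ) + 1)⁻¹), f x) * ((n : ℝ) + 1))
      atTop (𝓝 (f a)) := by
    have hG : HasDerivAt (fun u => ∫ x in a..u, f x) (f a) a :=
      (hcont.integral_hasStrictDerivAt a a).hasDerivAt
    have := seq_tendsto_slope hG
    simpa using this
  have h2 : Tendsto (fun n => ∫ x, F n x ∂μ) atTop (𝓝 (f b - f a)) := by
    have := hb'.sub ha'
    refine this.congr fun n => (hInt n).symm
  have key : ∫ x, f' x ∂μ = f b - f a := tendsto_nhds_unique hDCT h2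
  have hmeas : AEStronglyMeasurable f' μ :=
    aestronglyMeasurable_of_tendsto_ae atTop (fun n => (hFcont n).aestronglyMeasurable) hlim
  have hbound' : ∀ᵐ x ∂μ, ‖f' x‖ ≤ (K : ℝ) := by
    filter_upwards [hlim] with x hx
    exact le_of_tendsto hx.norm (Eventually.of_forall fun n => hboundpt n x)
  have hint : Integrable f' μ := (integrable_const (K:ℝ)).mono' hmeas hbound'
  constructor
  · rw [intervalIntegrable_iff, uIoc_of_le hab, integrableOn_Ioc_iff_integrableOn_Ioo]
    exact hint
  · rw [intervalIntegral.integral_of_le hab, integral_Ioc_eq_integral_Ioo]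
    exact key

section Volterra

variable (ε : ℝ) (β₁ β₂ : ℝ → ℝ)

noncomputable def tau : ℝ → ℝ := fun x => min (max x 0) 1

lemma tau_nonneg (x : ℝ) : 0 ≤ tau x := le_min (le_max_right x 0) zero_le_one
lemma tau_le_one (x : ℝ) : tau x ≤ 1 := min_le_right _ _
lemma tau_mem (x : ℝ) : tau x ∈ Icc (0:ℝ) 1 := ⟨tau_nonneg x, tau_le_one x⟩
lemma tau_eq_self {x : ℝ} (hx : x ∈ Icc (0:ℝ) 1) : tau x = x := by
  simp only [tau, max_eq_left hx.1, min_eq_left hx.2]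
lemma tau_continuous : Continuous tau := (continuous_id.max continuous_const).min continuous_const

/-- primitive of a continuous function is continuous -/
lemma cont_primitive {f : ℝ → ℝ} (hf : Continuous f) : Continuous (fun y => ∫ t in (0:ℝ)..y, f t) := by
  refine continuous_iff_continuousAt.2 fun y => ?_
  exact ((hf.integral_hasStrictDerivAt 0 y).hasDerivAt).continuousAt

variable (hε : 0 < ε) (hβ₁ : Continuous β₁) (hβ₂ : Continuous β₂)
  (Cb Cc : ℝ) (hCb : ∀ x, |β₁ x| ≤ Cb) (hCc : ∀ x, |β₂ x| ≤ Cc)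

noncomputable def vker (f : ℝ →ᵇ ℝ) : ℝ → ℝ :=
  fun s => β₁ s * f s + β₂ s * ∫ t in (0:ℝ)..s, f t

lemma vker_cont (f : ℝ →ᵇ ℝ) (hβ₁ : Continuous β₁) (hβ₂ : Continuous β₂) :
    Continuous (vker β₁ β₂ f) :=
  (hβ₁.mul f.continuous).add (hβ₂.mul (cont_primitive f.continuous))

lemma vker_bound (f : ℝ →ᵇ ℝ) (hCb : ∀ x, |β₁ x| ≤ Cb) (hCc : ∀ x, |β₂ x| ≤ Cc)
    {s : ℝ} (hs : s ∈ Icc (0:ℝ) 1) : |vker β₁ β₂ f s| ≤ (Cb + Cc) * ‖f‖ := by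
  have h1 : |∫ t in (0:ℝ)..s, f t| ≤ ‖f‖ * |s - 0| := by
    rw [← Real.norm_eq_abs]
    exact intervalIntegral.norm_integral_le_of_norm_le_const (fun t _ => f.norm_coe_le_norm t)
  have h2 : |∫ t in (0:ℝ)..s, f t| ≤ ‖f‖ := by
    refine h1.trans ?_
    rw [sub_zero, abs_of_nonneg hs.1]
    nlinarith [norm_nonneg f, hs.2]
  have h3 : |f s| ≤ ‖f‖ := f.norm_coe_le_norm s
  calc |vker β₁ β₂ f s| ≤ |β₁ s * f s| + |β₂ s * ∫ t in (0:ℝ)..s, f t| := abs_add_le _ _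
    _ = |β₁ s| * |f s| + |β₂ s| * |∫ t in (0:ℝ)..s, f t| := by rw [abs_mul, abs_mul]
    _ ≤ Cb * ‖f‖ + Cc * ‖f‖ := by
        have hb1 : 0 ≤ Cb := (abs_nonneg _).trans (hCb 0)
        have hc1 : 0 ≤ Cc := (abs_nonneg _).trans (hCc 0)
        have := norm_nonneg f
        have := abs_nonneg (f s)
        have := abs_nonneg (∫ t in (0:ℝ)..s, f t)
        nlinarith [hCb s, hCc s, abs_nonneg (β₁ s), abs_nonneg (β₂ s)]
    _ = (Cb + Cc) * ‖f‖ := by ring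

noncomputable def Tmap (hε : 0 < ε) (hβ₁ : Continuous β₁) (hβ₂ : Continuous β₂)
    (hCb : ∀ x, |β₁ x| ≤ Cb) (hCc : ∀ x, |β₂ x| ≤ Cc) (f : ℝ →ᵇ ℝ) : ℝ →ᵇ ℝ :=
  ofNormedAddCommGroup
    (fun x => 1 + ε⁻¹ * ∫ s in (0:ℝ)..(tau x), vker β₁ β₂ f s)
    (by
      have : Continuous (fun y => ∫ s in (0:ℝ)..y, vker β₁ β₂ f s) :=
        cont_primitive (vker_cont β₁ β₂ f hβ₁ hβ₂)
      exact continuous_const.add (continuous_const.mul (this.comp tau_continuous)))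
    (1 + ε⁻¹ * ((Cb + Cc) * ‖f‖))
    (by
      intro x
      have hker : ∀ s ∈ uIoc (0:ℝ) (tau x), ‖vker β₁ β₂ f s‖ ≤ (Cb + Cc) * ‖f‖ := by
        intro s hs
        rw [uIoc_of_le (tau_nonneg x)] at hs
        exact vker_bound β₁ β₂ Cb Cc f hCb hCc ⟨hs.1.le, hs.2.trans (tau_le_one x)⟩
      have h1 : |∫ s in (0:ℝ)..(tau x), vker β₁ β₂ f s| ≤ ((Cb + Cc) * ‖f‖) * |tau x - 0| := by
        rw [← Real.norm_eq_abs]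
        exact intervalIntegral.norm_integral_le_of_norm_le_const hker
      have hCC : 0 ≤ (Cb + Cc) * ‖f‖ := by
        have := (abs_nonneg (β₁ 0)).trans (hCb 0)
        have := (abs_nonneg (β₂ 0)).trans (hCc 0)
        have := norm_nonneg f
        positivity
      have h2 : |∫ s in (0:ℝ)..(tau x), vker β₁ β₂ f s| ≤ (Cb + Cc) * ‖f‖ := by
        refine h1.trans ?_
        rw [sub_zero, abs_of_nonneg (tau_nonneg x)]
        nlinarith [tau_le_one x]
      have : ‖(1:ℝ) + ε⁻¹ * ∫ s in (0:ℝ)..(tau x), vker β₁ β₂ f s‖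
          ≤ 1 + |ε⁻¹ * ∫ s in (0:ℝ)..(tau x), vker β₁ β₂ f s| := by
        calc ‖(1:ℝ) + ε⁻¹ * ∫ s in (0:ℝ)..(tau x), vker β₁ β₂ f s‖
            ≤ ‖(1:ℝ)‖ + ‖ε⁻¹ * ∫ s in (0:ℝ)..(tau x), vker β₁ β₂ f s‖ := norm_add_le _ _
          _ = 1 + |ε⁻¹ * ∫ s in (0:ℝ)..(tau x), vker β₁ β₂ f s| := by
              rw [Real.norm_eq_abs, Real.norm_eq_abs, abs_one]
      refine this.trans ?_
      rw [abs_mul, abs_of_nonneg (inv_nonneg.2 hε.le)]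
      have : ε⁻¹ * |∫ s in (0:ℝ)..(tau x), vker β₁ β₂ f s| ≤ ε⁻¹ * ((Cb + Cc) * ‖f‖) :=
        mul_le_mul_of_nonneg_left h2 (inv_nonneg.2 hε.le)
      linarith)


lemma Tmap_apply (f : ℝ →ᵇ ℝ) (x : ℝ) :
    Tmap ε β₁ β₂ Cb Cc hε hβ₁ hβ₂ hCb hCc f x
      = 1 + ε⁻¹ * ∫ s in (0:ℝ)..(tau x), vker β₁ β₂ f s := rfl

lemma Tmap_step (F1 G1 : ℝ →ᵇ ℝ) (n : ℕ) (D : ℝ) (hD : 0 ≤ D)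
    (hFG : ∀ s ∈ Icc (0:ℝ) 1, |F1 s - G1 s| ≤ D * s ^ n) (x : ℝ) :
    |Tmap ε β₁ β₂ Cb Cc hε hβ₁ hβ₂ hCb hCc F1 x - Tmap ε β₁ β₂ Cb Cc hε hβ₁ hβ₂ hCb hCc G1 x|
      ≤ ε⁻¹ * (Cb + Cc) * D * (tau x) ^ (n + 1) / (n + 1) := by
  have hb1 : 0 ≤ Cb := (abs_nonneg _).trans (hCb 0)
  have hc1 : 0 ≤ Cc := (abs_nonneg _).trans (hCc 0)
  have hτ0 := tau_nonneg x
  have hτ1 := tau_le_one x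
  have hcontF : Continuous (fun s => (F1 s : ℝ) - G1 s) := F1.continuous.sub G1.continuous
  -- inner integral difference bound
  have hinner : ∀ s ∈ Icc (0:ℝ) 1,
      |(∫ t in (0:ℝ)..s, F1 t) - ∫ t in (0:ℝ)..s, G1 t| ≤ D * s ^ n := by
    intro s hs
    have e : (∫ t in (0:ℝ)..s, F1 t) - ∫ t in (0:ℝ)..s, G1 t
        = ∫ t in (0:ℝ)..s, (F1 t - G1 t) := by
      rw [intervalIntegral.integral_sub (F1.continuous.intervalIntegrable _ _)
        (G1.continuous.intervalIntegrable _ _)]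
    rw [e, ← Real.norm_eq_abs]
    have h1 : ‖∫ t in (0:ℝ)..s, (F1 t - G1 t)‖ ≤ ∫ t in (0:ℝ)..s, ‖F1 t - G1 t‖ :=
      intervalIntegral.norm_integral_le_integral_norm hs.1
    refine h1.trans ?_
    have h2 : ∫ t in (0:ℝ)..s, ‖F1 t - G1 t‖ ≤ ∫ t in (0:ℝ)..s, D * t ^ n := by
      refine intervalIntegral.integral_mono_on hs.1 (hcontF.norm.intervalIntegrable _ _)
        ((continuous_const.mul (continuous_pow n)).intervalIntegrable _ _) ?_
      intro t ht
      rw [Real.norm_eq_abs]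
      exact hFG t ⟨ht.1, ht.2.trans hs.2⟩
    refine h2.trans ?_
    rw [intervalIntegral.integral_const_mul, integral_pow]
    have hsn : s ^ (n+1) ≤ s ^ n := pow_le_pow_of_le_one hs.1 hs.2 (by omega)
    have : (0:ℝ) ^ (n+1) = 0 := by
      exact zero_pow (by omega)
    rw [this, sub_zero]
    have hn1 : (1:ℝ) ≤ (n:ℝ) + 1 := by push_cast; linarith [Nat.cast_nonneg (α := ℝ) n]
    have hpow0 : (0:ℝ) ≤ s ^ (n+1) := pow_nonneg hs.1 _
    calc D * (s ^ (n + 1) / ((n:ℝ) + 1)) ≤ D * s ^ (n+1) := by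
          refine mul_le_mul_of_nonneg_left ?_ hD
          rw [div_le_iff₀ (by linarith)]
          nlinarith
      _ ≤ D * s ^ n := mul_le_mul_of_nonneg_left hsn hD
  -- kernel difference bound
  have hker : ∀ s ∈ Icc (0:ℝ) 1,
      |vker β₁ β₂ F1 s - vker β₁ β₂ G1 s| ≤ (Cb + Cc) * D * s ^ n := by
    intro s hs
    have e : vker β₁ β₂ F1 s - vker β₁ β₂ G1 s
        = β₁ s * (F1 s - G1 s)
          + β₂ s * ((∫ t in (0:ℝ)..s, F1 t) - ∫ t in (0:ℝ)..s, G1 t) := by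
      simp only [vker]; ring
    rw [e]
    have hsn : (0:ℝ) ≤ s ^ n := pow_nonneg hs.1 _
    calc |β₁ s * (F1 s - G1 s) + β₂ s * ((∫ t in (0:ℝ)..s, F1 t) - ∫ t in (0:ℝ)..s, G1 t)|
        ≤ |β₁ s| * |F1 s - G1 s| + |β₂ s| * |(∫ t in (0:ℝ)..s, F1 t) - ∫ t in (0:ℝ)..s, G1 t| := by
          refine (abs_add_le _ _).trans ?_
          rw [abs_mul, abs_mul]
      _ ≤ Cb * (D * s ^ n) + Cc * (D * s ^ n) := by
          have := hFG s hs; have := hinner s hs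
          nlinarith [hCb s, hCc s, abs_nonneg (β₁ s), abs_nonneg (β₂ s),
            abs_nonneg (F1 s - G1 s), abs_nonneg ((∫ t in (0:ℝ)..s, F1 t) - ∫ t in (0:ℝ)..s, G1 t)]
      _ = (Cb + Cc) * D * s ^ n := by ring
  -- outer integral
  rw [Tmap_apply, Tmap_apply]
  have e2 : (1 + ε⁻¹ * ∫ s in (0:ℝ)..(tau x), vker β₁ β₂ F1 s)
      - (1 + ε⁻¹ * ∫ s in (0:ℝ)..(tau x), vker β₁ β₂ G1 s)
      = ε⁻¹ * ∫ s in (0:ℝ)..(tau x), (vker β₁ β₂ F1 s - vker β₁ β₂ G1 s) := by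
    rw [intervalIntegral.integral_sub ((vker_cont β₁ β₂ F1 hβ₁ hβ₂).intervalIntegrable _ _)
      ((vker_cont β₁ β₂ G1 hβ₁ hβ₂).intervalIntegrable _ _)]
    ring
  rw [e2, abs_mul, abs_of_nonneg (inv_nonneg.2 hε.le)]
  have h3 : |∫ s in (0:ℝ)..(tau x), (vker β₁ β₂ F1 s - vker β₁ β₂ G1 s)|
      ≤ ∫ s in (0:ℝ)..(tau x), (Cb + Cc) * D * s ^ n := by
    rw [← Real.norm_eq_abs]
    refine (intervalIntegral.norm_integral_le_integral_norm hτ0).trans ?_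
    refine intervalIntegral.integral_mono_on hτ0
      (((vker_cont β₁ β₂ F1 hβ₁ hβ₂).sub (vker_cont β₁ β₂ G1 hβ₁ hβ₂)).norm.intervalIntegrable _ _)
      ((continuous_const.mul (continuous_pow n)).intervalIntegrable _ _) ?_
    intro t ht
    rw [Real.norm_eq_abs]
    exact hker t ⟨ht.1, ht.2.trans hτ1⟩
  have h4 : ∫ s in (0:ℝ)..(tau x), (Cb + Cc) * D * s ^ n
      = (Cb + Cc) * D * ((tau x) ^ (n+1) / ((n:ℝ)+1)) := by
    rw [intervalIntegral.integral_const_mul, integral_pow]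
    norm_num
  have h5 : ε⁻¹ * |∫ s in (0:ℝ)..(tau x), (vker β₁ β₂ F1 s - vker β₁ β₂ G1 s)|
      ≤ ε⁻¹ * ((Cb + Cc) * D * ((tau x) ^ (n+1) / ((n:ℝ)+1))) := by
    refine mul_le_mul_of_nonneg_left ?_ (inv_nonneg.2 hε.le)
    rw [← h4]; exact h3
  refine h5.trans_eq ?_
  push_cast
  ring

lemma Tmap_iter_bound (f g : ℝ →ᵇ ℝ) (n : ℕ) (x : ℝ) :
    |((Tmap ε β₁ β₂ Cb Cc hε hβ₁ hβ₂ hCb hCc)^[n] f) x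
      - ((Tmap ε β₁ β₂ Cb Cc hε hβ₁ hβ₂ hCb hCc)^[n] g) x|
    ≤ dist f g * (ε⁻¹ * (Cb + Cc)) ^ n * (tau x) ^ n / n.factorial := by
  induction n generalizing x with
  | zero =>
    simp only [Function.iterate_zero, id_eq, pow_zero, Nat.factorial_zero, Nat.cast_one,
      mul_one, div_one]
    rw [← Real.dist_eq]
    exact dist_coe_le_dist x
  | succ n ih =>
    have hb1 : 0 ≤ Cb := (abs_nonneg _).trans (hCb 0)
    have hc1 : 0 ≤ Cc := (abs_nonneg _).trans (hCc 0)
    have hKK : 0 ≤ ε⁻¹ * (Cb + Cc) := by positivity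
    have hD : 0 ≤ dist f g * (ε⁻¹ * (Cb + Cc)) ^ n / n.factorial := by positivity
    have hFG : ∀ s ∈ Icc (0:ℝ) 1,
        |((Tmap ε β₁ β₂ Cb Cc hε hβ₁ hβ₂ hCb hCc)^[n] f) s
          - ((Tmap ε β₁ β₂ Cb Cc hε hβ₁ hβ₂ hCb hCc)^[n] g) s|
        ≤ (dist f g * (ε⁻¹ * (Cb + Cc)) ^ n / n.factorial) * s ^ n := by
      intro s hs
      have := ih s
      rw [tau_eq_self hs] at this
      refine this.trans_eq ?_
      ring
    have := Tmap_step ε β₁ β₂ hε hβ₁ hβ₂ Cb Cc hCb hCc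
      ((Tmap ε β₁ β₂ Cb Cc hε hβ₁ hβ₂ hCb hCc)^[n] f)
      ((Tmap ε β₁ β₂ Cb Cc hε hβ₁ hβ₂ hCb hCc)^[n] g) n
      (dist f g * (ε⁻¹ * (Cb + Cc)) ^ n / n.factorial) hD hFG x
    rw [Function.iterate_succ_apply', Function.iterate_succ_apply']
    refine this.trans_eq ?_
    rw [Nat.factorial_succ]
    have hnf : ((n.factorial : ℝ)) ≠ 0 := by
      exact_mod_cast Nat.factorial_ne_zero n
    have hn1 : ((n:ℝ) + 1) ≠ 0 := by positivity
    have hεne : ε ≠ 0 := hε.ne'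
    field_simp
    push_cast
    have hεε : ε * ε⁻¹ = 1 := mul_inv_cancel₀ hεne
    linear_combination (-(dist f g * tau x * tau x ^ n * ↑n.factorial * (Cb * ε⁻¹ + Cc * ε⁻¹) ^ n
      * (Cb * ↑n + Cb + Cc * ↑n + Cc))) * hεε

lemma Tmap_iter_dist (f g : ℝ →ᵇ ℝ) (n : ℕ) :
    dist ((Tmap ε β₁ β₂ Cb Cc hε hβ₁ hβ₂ hCb hCc)^[n] f)
      ((Tmap ε β₁ β₂ Cb Cc hε hβ₁ hβ₂ hCb hCc)^[n] g)
    ≤ (ε⁻¹ * (Cb + Cc)) ^ n / n.factorial * dist f g := by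
  have hb1 : 0 ≤ Cb := (abs_nonneg _).trans (hCb 0)
  have hc1 : 0 ≤ Cc := (abs_nonneg _).trans (hCc 0)
  have hKK : 0 ≤ ε⁻¹ * (Cb + Cc) := by positivity
  have h0 : 0 ≤ (ε⁻¹ * (Cb + Cc)) ^ n / n.factorial * dist f g := by positivity
  rw [BoundedContinuousFunction.dist_le h0]
  intro x
  rw [Real.dist_eq]
  refine (Tmap_iter_bound ε β₁ β₂ hε hβ₁ hβ₂ Cb Cc hCb hCc f g n x).trans ?_
  have hτ : (tau x) ^ n ≤ 1 := pow_le_one₀ (tau_nonneg x) (tau_le_one x)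
  have hτ0 : (0:ℝ) ≤ (tau x) ^ n := pow_nonneg (tau_nonneg x) n
  have hnf : (0:ℝ) < n.factorial := by exact_mod_cast Nat.factorial_pos n
  have hle : dist f g * (ε⁻¹ * (Cb + Cc)) ^ n * tau x ^ n ≤ dist f g * (ε⁻¹ * (Cb + Cc)) ^ n := by
    exact mul_le_of_le_one_right (mul_nonneg dist_nonneg (pow_nonneg hKK n)) hτ
  calc dist f g * (ε⁻¹ * (Cb + Cc)) ^ n * tau x ^ n / n.factorial
      ≤ dist f g * (ε⁻¹ * (Cb + Cc)) ^ n / n.factorial := by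
        gcongr
    _ = (ε⁻¹ * (Cb + Cc)) ^ n / n.factorial * dist f g := by ring

include hε hβ₁ hβ₂ hCb hCc in
lemma volterra_exists :
    ∃ u : ℝ → ℝ, Continuous u ∧
      (∀ x, u x = 1 + ε⁻¹ * ∫ s in (0:ℝ)..(tau x),
          (β₁ s * u s + β₂ s * ∫ t in (0:ℝ)..s, u t)) ∧
      ((∀ x, 0 ≤ β₁ x) → (∀ x, 0 ≤ β₂ x) → ∀ x, 1 ≤ u x) := by
  have hb1 : 0 ≤ Cb := (abs_nonneg _).trans (hCb 0)
  have hc1 : 0 ≤ Cc := (abs_nonneg _).trans (hCc 0)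
  set KK := ε⁻¹ * (Cb + Cc) with hKK
  have hKK0 : 0 ≤ KK := by positivity
  set T := Tmap ε β₁ β₂ Cb Cc hε hβ₁ hβ₂ hCb hCc with hT
  -- choose n₀
  have htend0 : Tendsto (fun n : ℕ => KK ^ n / n.factorial) atTop (𝓝 0) :=
    FloorSemiring.tendsto_pow_div_factorial_atTop KK
  have hev : ∀ᶠ n : ℕ in atTop, KK ^ n / n.factorial < 1 := by
    have := htend0.eventually (eventually_lt_nhds (by norm_num : (0:ℝ) < 1))
    exact this
  obtain ⟨n₀, hn₀1, hn₀⟩ : ∃ n₀ : ℕ, 1 ≤ n₀ ∧ KK ^ n₀ / n₀.factorial < 1 := by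
    obtain ⟨n, hn, hn'⟩ := (eventually_ge_atTop 1).and hev |>.exists
    exact ⟨n, hn, hn'⟩
  set k : ℝ := KK ^ n₀ / n₀.factorial with hk
  have hk0 : 0 ≤ k := by positivity
  have hC : ContractingWith k.toNNReal (T^[n₀]) := by
    constructor
    · rw [← NNReal.coe_lt_coe, Real.coe_toNNReal _ hk0]
      exact hn₀
    · apply LipschitzWith.of_dist_le_mul
      intro f g
      rw [Real.coe_toNNReal _ hk0]
      exact Tmap_iter_dist ε β₁ β₂ hε hβ₁ hβ₂ Cb Cc hCb hCc f g n₀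
  haveI : Nonempty (ℝ →ᵇ ℝ) := ⟨0⟩
  set u₀ := hC.fixedPoint (T^[n₀]) with hu₀
  have hfix : Function.IsFixedPt T u₀ := ContractingWith.isFixedPt_fixedPoint_iterate hC
  refine ⟨⇑u₀, u₀.continuous, ?_, ?_⟩
  · intro x
    conv_lhs => rw [← hfix.eq]
    rfl
  · intro hbpos hcpos
    -- positivity of iterates from 0
    have step1 : ∀ f : ℝ →ᵇ ℝ, (∀ x, 0 ≤ f x) → ∀ x, 1 ≤ T f x := by
      intro f hfpos x
      rw [hT, Tmap_apply]
      have hint : 0 ≤ ∫ s in (0:ℝ)..(tau x), vker β₁ β₂ f s := by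
        refine intervalIntegral.integral_nonneg (tau_nonneg x) ?_
        intro u hu
        have h1 : 0 ≤ ∫ t in (0:ℝ)..u, f t :=
          intervalIntegral.integral_nonneg hu.1 (fun t _ => hfpos t)
        have := hbpos u; have := hcpos u; have := hfpos u
        simp only [vker]
        positivity
      nlinarith [inv_nonneg.2 hε.le]
    have step0 : ∀ m : ℕ, ∀ x, 0 ≤ (T^[m] (0 : ℝ →ᵇ ℝ)) x := by
      intro m
      induction m with
      | zero => intro x; simp
      | succ m ih =>
        intro x
        rw [Function.iterate_succ_apply']
        exact le_trans zero_le_one (step1 _ ih x)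
    have step2 : ∀ m : ℕ, 1 ≤ m → ∀ x, 1 ≤ (T^[m] (0 : ℝ →ᵇ ℝ)) x := by
      intro m hm x
      obtain ⟨p, rfl⟩ : ∃ p, m = p + 1 := ⟨m - 1, by omega⟩
      rw [Function.iterate_succ_apply']
      exact step1 _ (step0 p) x
    intro x
    have htend : Tendsto (fun j : ℕ => (T^[n₀])^[j] (0 : ℝ →ᵇ ℝ)) atTop (𝓝 u₀) :=
      hC.tendsto_iterate_fixedPoint (0 : ℝ →ᵇ ℝ)
    have heval : Tendsto (fun j : ℕ => ((T^[n₀])^[j] (0 : ℝ →ᵇ ℝ)) x) atTop (𝓝 (u₀ x)) := by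
      have hcont : Continuous (fun h : ℝ →ᵇ ℝ => h x) :=
        continuous_eval_const x
      exact (hcont.tendsto u₀).comp htend
    refine ge_of_tendsto heval ?_
    filter_upwards [eventually_ge_atTop 1] with j hj
    have : (T^[n₀])^[j] (0 : ℝ →ᵇ ℝ) = T^[n₀ * j] (0 : ℝ →ᵇ ℝ) := by
      rw [Function.iterate_mul]
    rw [this]
    exact step2 (n₀ * j) (by nlinarith) x

end Volterra

section MainHelpers
lemma tau_lip (x y : ℝ) : |tau x - tau y| ≤ |x - y| := by
  refine (abs_min_sub_min_le_max _ _ _ _).trans ?_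
  rw [sub_self, abs_zero]
  refine max_le ((abs_max_sub_max_le_abs _ _ _).trans le_rfl) (abs_nonneg _)

lemma lipschitzWith_of_abs_sub_le {f : ℝ → ℝ} {L : ℝ}
    (h : ∀ x y, |f x - f y| ≤ L * |x - y|) : LipschitzWith L.toNNReal f := by
  apply LipschitzWith.of_dist_le_mul
  intro x y
  rw [Real.dist_eq, Real.dist_eq]
  exact (h x y).trans (mul_le_mul_of_nonneg_right (Real.le_coe_toNNReal L) (abs_nonneg _))
end MainHelpers

lemma ftc_ae_deriv' (f f' : ℝ → ℝ) (K : NNReal) (hf : LipschitzWith K f)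
    {a b : ℝ} (hab : a ≤ b)
    (hd : ∀ᵐ x ∂(volume.restrict (Ioo a b)), HasDerivAt f (f' x) x) :
    IntervalIntegrable f' volume a b ∧ ∫ x in a..b, f' x = f b - f a :=
  ftc_ae_deriv f f' K hf hab hd

lemma volterra_exists' (ε : ℝ) (β₁ β₂ : ℝ → ℝ) (hε : 0 < ε) (hβ₁ : Continuous β₁)
    (hβ₂ : Continuous β₂)
    (Cb Cc : ℝ) (hCb : ∀ x, |β₁ x| ≤ Cb) (hCc : ∀ x, |β₂ x| ≤ Cc) :
    ∃ u : ℝ → ℝ, Continuous u ∧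
      (∀ x, u x = 1 + ε⁻¹ * ∫ s in (0:ℝ)..(tau x),
          (β₁ s * u s + β₂ s * ∫ t in (0:ℝ)..s, u t)) ∧
      ((∀ x, 0 ≤ β₁ x) → (∀ x, 0 ≤ β₂ x) → ∀ x, 1 ≤ u x) :=
  volterra_exists ε β₁ β₂ hε hβ₁ hβ₂ Cb Cc hCb hCc

set_option maxHeartbeats 2000000 in
lemma main_aux (ε β : ℝ) (hε : 0 < ε) (hβ : 0 < β)
    (bt ct : ℝ → ℝ) (hbtc : Continuous bt) (hctc : Continuous ct)
    (CB CC : ℝ) (hCB : ∀ x, |bt x| ≤ CB) (hCC : ∀ x, |ct x| ≤ CC)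
    (hbtβ : ∀ x, β ≤ bt x) (hct0 : ∀ x, 0 ≤ ct x)
    (vt v' : ℝ → ℝ) (Kv : NNReal) (hvlip : LipschitzWith Kv vt)
    (CV : ℝ) (hCV : ∀ x, |vt x| ≤ CV)
    (hv'ae : ∀ᵐ x ∂(volume.restrict (Ioo (0:ℝ) 1)), HasDerivAt vt (v' x) x)
    (hv0 : vt 0 = 0) (hv1 : vt 1 = 0)
    (κ M : ℝ) (hM0 : 0 ≤ M)
    (hMae : ∀ᵐ x ∂(volume.restrict (Icc (0:ℝ) 1)),
      |ε * v' x + bt x * vt x + (∫ s in x..(1:ℝ), ct s * vt s) + κ| ≤ M)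
    (x₀ : ℝ) (hx₀ : x₀ ∈ Ioo (0:ℝ) 1) : |vt x₀| ≤ 2 / β * M := by
  have hbt0 : ∀ x, 0 ≤ bt x := fun x => hβ.le.trans (hbtβ x)
  -- u₁ : forward Volterra solution
  obtain ⟨u₁, hu₁c, hu₁eq, hu₁pos'⟩ := volterra_exists' ε bt ct hε hbtc hctc CB CC hCB hCC
  have hu₁pos : ∀ x, 1 ≤ u₁ x := hu₁pos' hbt0 hct0
  have hu₁nn : ∀ x, 0 ≤ u₁ x := fun x => zero_le_one.trans (hu₁pos x)
  -- u₂ : reflected Volterra solution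
  obtain ⟨u₂, hu₂c, hu₂eq, -⟩ := volterra_exists' ε (fun s => -(bt (1 - s))) (fun s => ct (1 - s))
    hε ((hbtc.comp (continuous_const.sub continuous_id)).neg)
    (hctc.comp (continuous_const.sub continuous_id)) CB CC
    (fun x => by rw [abs_neg]; exact hCB _) (fun x => hCC _)
  -- tau-invariance and boundedness of u₁, u₂
  have hu₁tau : ∀ x, u₁ x = u₁ (tau x) := by
    intro x
    rw [hu₁eq x, hu₁eq (tau x), tau_eq_self (tau_mem x)]
  have hu₂tau : ∀ x, u₂ x = u₂ (tau x) := by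
    intro x
    rw [hu₂eq x, hu₂eq (tau x), tau_eq_self (tau_mem x)]
  obtain ⟨B₁, hB₁⟩ := isCompact_Icc.exists_bound_of_continuousOn
    (s := Icc (0:ℝ) 1) hu₁c.continuousOn
  obtain ⟨B₂, hB₂⟩ := isCompact_Icc.exists_bound_of_continuousOn
    (s := Icc (0:ℝ) 1) hu₂c.continuousOn
  have hu₁bd : ∀ x, |u₁ x| ≤ B₁ := by
    intro x; rw [hu₁tau x]; exact hB₁ _ (tau_mem x)
  have hu₂bd : ∀ x, |u₂ x| ≤ B₂ := by
    intro x; rw [hu₂tau x]; exact hB₂ _ (tau_mem x)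
  have hB₁0 : 0 ≤ B₁ := (abs_nonneg _).trans (hu₁bd 0)
  have hB₂0 : 0 ≤ B₂ := (abs_nonneg _).trans (hu₂bd 0)
  have hCB0 : 0 ≤ CB := (abs_nonneg _).trans (hCB 0)
  have hCC0 : 0 ≤ CC := (abs_nonneg _).trans (hCC 0)
  have hCV0 : 0 ≤ CV := (abs_nonneg _).trans (hCV 0)
  -- derived objects for u₁
  set P₁ : ℝ → ℝ := fun x => ∫ t in (0:ℝ)..x, u₁ t with hP₁def
  have hP₁d : ∀ x, HasDerivAt P₁ (u₁ x) x := fun x =>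
    (hu₁c.integral_hasStrictDerivAt 0 x).hasDerivAt
  have hP₁c : Continuous P₁ := by
    refine continuous_iff_continuousAt.2 fun x => (hP₁d x).continuousAt
  set q₁d : ℝ → ℝ := fun x => ε⁻¹ * (bt x * u₁ x + ct x * P₁ x) with hq₁ddef
  have hq₁dc : Continuous q₁d :=
    continuous_const.mul ((hbtc.mul hu₁c).add (hctc.mul hP₁c))
  set q₁ : ℝ → ℝ := fun x => 1 + ε⁻¹ * ∫ s in (0:ℝ)..x,
    (bt s * u₁ s + ct s * ∫ t in (0:ℝ)..s, u₁ t) with hq₁def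
  have hq₁d : ∀ x, HasDerivAt q₁ (q₁d x) x := by
    intro x
    have h1 : HasDerivAt (fun y => ∫ s in (0:ℝ)..y,
        (bt s * u₁ s + ct s * ∫ t in (0:ℝ)..s, u₁ t))
        (bt x * u₁ x + ct x * ∫ t in (0:ℝ)..x, u₁ t) x :=
      (((hbtc.mul hu₁c).add (hctc.mul hP₁c)).integral_hasStrictDerivAt 0 x).hasDerivAt
    have := (h1.const_mul ε⁻¹).const_add 1
    exact this
  have hq₁u : ∀ x ∈ Icc (0:ℝ) 1, q₁ x = u₁ x := by
    intro x hx
    have h0 := hu₁eq x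
    rw [tau_eq_self hx] at h0
    rw [hq₁def]
    exact h0.symm
  -- P₁ bound on [0,1]
  have hP₁bd : ∀ x ∈ Icc (0:ℝ) 1, |P₁ x| ≤ B₁ := by
    intro x hx
    rw [hP₁def]
    simp only
    rw [← Real.norm_eq_abs]
    refine (intervalIntegral.norm_integral_le_of_norm_le_const
      (C := B₁) (fun t _ => hu₁bd t)).trans ?_
    rw [sub_zero, abs_of_nonneg hx.1]
    nlinarith [hx.2]
  have hP₁nn : ∀ x, 0 ≤ x → 0 ≤ P₁ x := by
    intro x hx
    exact intervalIntegral.integral_nonneg hx (fun t _ => hu₁nn t)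
  -- global Lipschitz bound for u₁
  have hq₁c : Continuous q₁ := continuous_iff_continuousAt.2 fun x => (hq₁d x).continuousAt
  have hGbd : ∀ s ∈ Icc (0:ℝ) 1,
      |bt s * u₁ s + ct s * ∫ t in (0:ℝ)..s, u₁ t| ≤ CB * B₁ + CC * B₁ := by
    intro s hs
    have h1 : |bt s * u₁ s| ≤ CB * B₁ := by
      rw [abs_mul]
      exact mul_le_mul (hCB s) (hu₁bd s) (abs_nonneg _) hCB0
    have h2 : |ct s * ∫ t in (0:ℝ)..s, u₁ t| ≤ CC * B₁ := by
      rw [abs_mul]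
      exact mul_le_mul (hCC s) (hP₁bd s hs) (abs_nonneg _) hCC0
    exact (abs_add_le _ _).trans (by linarith)
  have hLu₁ : ∀ x y, |u₁ x - u₁ y| ≤ (ε⁻¹ * (CB * B₁ + CC * B₁)) * |x - y| := by
    intro x y
    have e1 : u₁ x - u₁ y = ε⁻¹ * ∫ s in (tau y)..(tau x),
        (bt s * u₁ s + ct s * ∫ t in (0:ℝ)..s, u₁ t) := by
      rw [hu₁tau x, hu₁tau y, ← hq₁u _ (tau_mem x), ← hq₁u _ (tau_mem y), hq₁def]
      simp only
      rw [← intervalIntegral.integral_interval_sub_left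
        (f := fun s => bt s * u₁ s + ct s * ∫ t in (0:ℝ)..s, u₁ t)
        (((hbtc.mul hu₁c).add (hctc.mul hP₁c)).intervalIntegrable (0:ℝ) (tau x))
        (((hbtc.mul hu₁c).add (hctc.mul hP₁c)).intervalIntegrable (0:ℝ) (tau y))]
      ring
    rw [e1, abs_mul, abs_of_nonneg (inv_nonneg.2 hε.le)]
    have h2 : |∫ s in (tau y)..(tau x), (bt s * u₁ s + ct s * ∫ t in (0:ℝ)..s, u₁ t)|
        ≤ (CB * B₁ + CC * B₁) * |tau x - tau y| := by
      rw [← Real.norm_eq_abs]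
      refine intervalIntegral.norm_integral_le_of_norm_le_const ?_
      intro s hs
      rw [Real.norm_eq_abs]
      refine hGbd s ?_
      rcases le_total (tau y) (tau x) with hc | hc
      · rw [uIoc_of_le hc] at hs
        exact ⟨(tau_nonneg y).trans hs.1.le, hs.2.trans (tau_le_one x)⟩
      · rw [uIoc_of_ge hc] at hs
        exact ⟨(tau_nonneg x).trans hs.1.le, hs.2.trans (tau_le_one y)⟩
    calc ε⁻¹ * |∫ s in (tau y)..(tau x), (bt s * u₁ s + ct s * ∫ t in (0:ℝ)..s, u₁ t)|
        ≤ ε⁻¹ * ((CB * B₁ + CC * B₁) * |tau x - tau y|) :=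
          mul_le_mul_of_nonneg_left h2 (inv_nonneg.2 hε.le)
      _ ≤ ε⁻¹ * ((CB * B₁ + CC * B₁) * |x - y|) := by
          refine mul_le_mul_of_nonneg_left ?_ (inv_nonneg.2 hε.le)
          refine mul_le_mul_of_nonneg_left (tau_lip x y) (by positivity)
      _ = (ε⁻¹ * (CB * B₁ + CC * B₁)) * |x - y| := by ring
  -- key inequality: β P₁ ≤ ε u₁ on [0,1]
  have hkey : ∀ x ∈ Icc (0:ℝ) 1, β * P₁ x ≤ ε * u₁ x := by
    have hhd : ∀ z, HasDerivAt (fun w => ε * q₁ w - β * P₁ w) (ε * q₁d z - β * u₁ z) z :=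
      fun z => ((hq₁d z).const_mul ε).sub ((hP₁d z).const_mul β)
    have hmono : MonotoneOn (fun w => ε * q₁ w - β * P₁ w) (Icc (0:ℝ) 1) := by
      refine monotoneOn_of_deriv_nonneg (convex_Icc _ _)
        ((continuous_const.mul hq₁c).sub (continuous_const.mul hP₁c)).continuousOn
        (fun z _ => (hhd z).differentiableAt.differentiableWithinAt) ?_
      intro z hz
      rw [interior_Icc] at hz
      rw [(hhd z).deriv]
      have h1 : ε * q₁d z = bt z * u₁ z + ct z * P₁ z := by
        rw [hq₁ddef]
        field_simp
      rw [h1]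
      have := hbtβ z; have := hct0 z; have := hu₁nn z; have := hP₁nn z hz.1.le
      nlinarith [hu₁pos z]
    intro x hx
    have h0 : (fun w => ε * q₁ w - β * P₁ w) 0 = ε := by
      simp only [hq₁def, hP₁def]
      rw [intervalIntegral.integral_same, intervalIntegral.integral_same]
      ring
    have h2 := hmono (left_mem_Icc.2 zero_le_one) hx hx.1
    rw [h0] at h2
    have h3 : ε ≤ ε * q₁ x - β * P₁ x := h2
    rw [hq₁u x hx] at h3
    nlinarith
  -- objects for u₂ : r, Φ₂
  set r : ℝ → ℝ := fun x => u₂ (1 - x) with hrdef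
  have hrc : Continuous r := hu₂c.comp (continuous_const.sub continuous_id)
  set Φ₂ : ℝ → ℝ := fun x => ∫ s in x..(1:ℝ), r s with hΦ₂def
  set P₂ : ℝ → ℝ := fun y => ∫ t in (0:ℝ)..y, u₂ t with hP₂def
  have hP₂d : ∀ x, HasDerivAt P₂ (u₂ x) x := fun x =>
    (hu₂c.integral_hasStrictDerivAt 0 x).hasDerivAt
  have hP₂c : Continuous P₂ := continuous_iff_continuousAt.2 fun x => (hP₂d x).continuousAt
  have hΦ₂P₂ : ∀ x, Φ₂ x = P₂ (1 - x) := by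
    intro x
    rw [hΦ₂def, hP₂def]
    simp only
    rw [show (∫ s in x..(1:ℝ), r s) = ∫ s in x..(1:ℝ), u₂ (1 - s) from rfl,
      intervalIntegral.integral_comp_sub_left u₂ 1, sub_self]
  have hΦ₂d : ∀ x, HasDerivAt Φ₂ (-(r x)) x := by
    intro x
    have h1 : HasDerivAt (fun y => ∫ s in (1:ℝ)..y, r s) (r x) x :=
      (hrc.integral_hasStrictDerivAt 1 x).hasDerivAt
    have h2 : Φ₂ = fun y => -(∫ s in (1:ℝ)..y, r s) := by
      funext y
      rw [hΦ₂def]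
      simp only
      rw [← intervalIntegral.integral_symm]
    rw [h2]
    exact h1.neg
  have hΦ₂c : Continuous Φ₂ := continuous_iff_continuousAt.2 fun x => (hΦ₂d x).continuousAt
  set rd : ℝ → ℝ := fun x => ε⁻¹ * (bt x * r x - ct x * Φ₂ x) with hrddef
  have hrdc : Continuous rd := continuous_const.mul ((hbtc.mul hrc).sub (hctc.mul hΦ₂c))
  set q₂d : ℝ → ℝ := fun y => ε⁻¹ * (-bt (1 - y) * u₂ y + ct (1 - y) * P₂ y) with hq₂ddef
  set q₂ : ℝ → ℝ := fun y => 1 + ε⁻¹ * ∫ s in (0:ℝ)..y,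
    (-bt (1 - s) * u₂ s + ct (1 - s) * ∫ t in (0:ℝ)..s, u₂ t) with hq₂def
  have hGc₂ : Continuous (fun s => -bt (1 - s) * u₂ s + ct (1 - s) * ∫ t in (0:ℝ)..s, u₂ t) :=
    (((hbtc.comp (continuous_const.sub continuous_id)).neg).mul hu₂c).add
      ((hctc.comp (continuous_const.sub continuous_id)).mul hP₂c)
  have hq₂d : ∀ y, HasDerivAt q₂ (q₂d y) y := by
    intro y
    have h1 := ((hGc₂.integral_hasStrictDerivAt 0 y).hasDerivAt.const_mul ε⁻¹).const_add 1
    exact h1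
  have hq₂c : Continuous q₂ := continuous_iff_continuousAt.2 fun y => (hq₂d y).continuousAt
  have hq₂u : ∀ y ∈ Icc (0:ℝ) 1, q₂ y = u₂ y := by
    intro y hy
    have h0 := hu₂eq y
    rw [tau_eq_self hy] at h0
    rw [hq₂def]
    exact h0.symm
  have hrd : ∀ x ∈ Ioo (0:ℝ) 1, HasDerivAt r (rd x) x := by
    intro x hx
    have hinner : HasDerivAt (fun y : ℝ => 1 - y) (-1) x := by
      simpa using (hasDerivAt_id x).const_sub 1
    have hcomp : HasDerivAt (q₂ ∘ fun y : ℝ => 1 - y) (q₂d (1 - x) * -1) x :=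
      HasDerivAt.comp x (hq₂d (1 - x)) hinner
    have hev : r =ᶠ[𝓝 x] (q₂ ∘ fun y : ℝ => 1 - y) := by
      filter_upwards [Ioo_mem_nhds hx.1 hx.2] with y hy
      rw [hrdef]
      exact (hq₂u (1 - y) ⟨by linarith [hy.2], by linarith [hy.1]⟩).symm
    have hder := hcomp.congr_of_eventuallyEq hev
    have hconst : q₂d (1 - x) * -1 = rd x := by
      rw [hq₂ddef, hrddef]
      simp only
      rw [show (1:ℝ) - (1 - x) = x by ring, ← hΦ₂P₂ x]
      rw [hrdef]
      ring
    rwa [hconst] at hder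
  have hr1 : r 1 = 1 := by
    rw [hrdef]
    simp only [sub_self]
    rw [hu₂eq 0]
    rw [show tau 0 = 0 from tau_eq_self ⟨le_refl _, zero_le_one⟩]
    simp
  set B : ℝ → ℝ := fun x => ∫ t in (0:ℝ)..x, bt t with hBdef
  have hBd : ∀ x, HasDerivAt B (bt x) x := fun x =>
    (hbtc.integral_hasStrictDerivAt 0 x).hasDerivAt
  have hBc : Continuous B := continuous_iff_continuousAt.2 fun x => (hBd x).continuousAt
  have hrpos : ∀ x ∈ Icc (0:ℝ) 1, 0 < r x := by
    by_contra hcon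
    push_neg at hcon
    obtain ⟨z, hz, hzle⟩ := hcon
    set S := {x ∈ Icc (0:ℝ) 1 | r x ≤ 0} with hSdef
    have hSne : S.Nonempty := ⟨z, hz, hzle⟩
    have hSclosed : IsClosed S :=
      (isClosed_Icc.inter (isClosed_le hrc continuous_const))
    have hScomp : IsCompact S :=
      isCompact_Icc.of_isClosed_subset hSclosed (fun x hx => hx.1)
    set y := sSup S with hydef
    have hyS : y ∈ S := hScomp.sSup_mem hSne
    have hy0 : 0 ≤ y := hyS.1.1
    have hy1 : y < 1 := by
      rcases lt_or_eq_of_le hyS.1.2 with h | h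
      · exact h
      · exfalso
        have := hyS.2
        rw [h, hr1] at this
        linarith
    have hfact : ∀ x, y < x → x ≤ 1 → 0 < r x := by
      intro x hyx hx1
      by_contra hc
      push_neg at hc
      have : x ∈ S := ⟨⟨hy0.trans hyx.le, hx1⟩, hc⟩
      have := le_csSup hScomp.bddAbove this
      rw [← hydef] at this
      linarith
    have hΦ₂y : ∀ x ∈ Icc y 1, 0 ≤ Φ₂ x := by
      intro x hx
      rw [hΦ₂def]
      refine intervalIntegral.integral_nonneg_of_ae_restrict hx.2 ?_
      have hsing : (volume.restrict (Icc x 1)) {y} = 0 := by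
        have h1 := Measure.restrict_le_self (μ := volume) (s := Icc x 1) ({y} : Set ℝ)
        have h2 : volume ({y} : Set ℝ) = 0 := Real.volume_singleton
        exact le_antisymm (h1.trans_eq h2) zero_le
      have hae : ∀ᵐ t ∂(volume.restrict (Icc x 1)), t ∉ ({y} : Set ℝ) :=
        measure_eq_zero_iff_ae_notMem.mp hsing
      filter_upwards [ae_restrict_mem measurableSet_Icc, hae] with t htmem hty
      have hty' : y < t := lt_of_le_of_ne (hx.1.trans htmem.1)
        (fun h => hty (by simp [← h]))
      exact (hfact t hty' htmem.2).le
    set E : ℝ → ℝ := fun x => r x * Real.exp (-B x / ε) with hEdef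
    have hEc : Continuous E := hrc.mul ((hBc.neg.div_const ε).rexp)
    have hEd : ∀ x ∈ Ioo (0:ℝ) 1, HasDerivAt E
        (rd x * Real.exp (-B x / ε) + r x * (Real.exp (-B x / ε) * (-bt x / ε))) x := by
      intro x hx
      have hexp : HasDerivAt (fun w => Real.exp (-B w / ε))
          (Real.exp (-B x / ε) * (-bt x / ε)) x :=
        HasDerivAt.exp ((hBd x).neg.div_const ε)
      exact (hrd x hx).mul hexp
    have hanti : AntitoneOn E (Icc y 1) := by
      refine antitoneOn_of_deriv_nonpos (convex_Icc _ _) hEc.continuousOn ?_ ?_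
      · intro x hx
        rw [interior_Icc] at hx
        have hx' : x ∈ Ioo (0:ℝ) 1 := ⟨lt_of_le_of_lt hy0 hx.1, hx.2⟩
        exact (hEd x hx').differentiableAt.differentiableWithinAt
      · intro x hx
        rw [interior_Icc] at hx
        have hx' : x ∈ Ioo (0:ℝ) 1 := ⟨lt_of_le_of_lt hy0 hx.1, hx.2⟩
        rw [(hEd x hx').deriv]
        have he : rd x * Real.exp (-B x / ε) + r x * (Real.exp (-B x / ε) * (-bt x / ε))
            = Real.exp (-B x / ε) * (-(ε⁻¹ * (ct x * Φ₂ x))) := by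
          rw [hrddef]
          field_simp
          ring
        rw [he]
        have h1 : 0 ≤ ct x * Φ₂ x :=
          mul_nonneg (hct0 x) (hΦ₂y x ⟨hx.1.le, hx.2.le⟩)
        have h2 : (0:ℝ) < Real.exp (-B x / ε) := Real.exp_pos _
        have h3 : 0 ≤ ε⁻¹ := inv_nonneg.2 hε.le
        have h4 : 0 ≤ ε⁻¹ * (ct x * Φ₂ x) := mul_nonneg h3 h1
        nlinarith [mul_nonneg h2.le h4]
    have hE1 : E 1 = Real.exp (-B 1 / ε) := by
      rw [hEdef]
      simp only
      rw [hr1, one_mul]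
    have hEy : E y ≤ 0 := by
      rw [hEdef]
      simp only
      exact mul_nonpos_of_nonpos_of_nonneg hyS.2 (Real.exp_pos _).le
    have hcompare := hanti (left_mem_Icc.2 hy1.le) (right_mem_Icc.2 hy1.le) hy1.le
    rw [hE1] at hcompare
    linarith [Real.exp_pos (-B 1 / ε)]
  have hrbd : ∀ x, |r x| ≤ B₂ := fun x => hu₂bd _
  have hΦ₂nn : ∀ x ∈ Icc (0:ℝ) 1, 0 ≤ Φ₂ x := by
    intro x hx
    rw [hΦ₂def]
    refine intervalIntegral.integral_nonneg hx.2 (fun t ht => ?_)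
    exact (hrpos t ⟨hx.1.trans ht.1, ht.2⟩).le
  have hΦ₂pos : 0 < Φ₂ x₀ := by
    rw [hΦ₂def]
    refine intervalIntegral.intervalIntegral_pos_of_pos_on
      (hrc.intervalIntegrable _ _) (fun t ht => ?_) hx₀.2
    exact hrpos t ⟨(hx₀.1.trans ht.1).le, ht.2.le⟩
  -- Lipschitz bound for u₂ and r
  have hP₂bd : ∀ x ∈ Icc (0:ℝ) 1, |P₂ x| ≤ B₂ := by
    intro x hx
    rw [hP₂def]
    simp only
    rw [← Real.norm_eq_abs]
    refine (intervalIntegral.norm_integral_le_of_norm_le_const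
      (C := B₂) (fun t _ => hu₂bd t)).trans ?_
    rw [sub_zero, abs_of_nonneg hx.1]
    nlinarith [hx.2]
  have hGbd₂ : ∀ s ∈ Icc (0:ℝ) 1,
      |-bt (1 - s) * u₂ s + ct (1 - s) * ∫ t in (0:ℝ)..s, u₂ t| ≤ CB * B₂ + CC * B₂ := by
    intro s hs
    have h1 : |(-bt (1 - s)) * u₂ s| ≤ CB * B₂ := by
      rw [abs_mul, abs_neg]
      exact mul_le_mul (hCB _) (hu₂bd s) (abs_nonneg _) hCB0
    have h2 : |ct (1 - s) * ∫ t in (0:ℝ)..s, u₂ t| ≤ CC * B₂ := by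
      rw [abs_mul]
      exact mul_le_mul (hCC _) (hP₂bd s hs) (abs_nonneg _) hCC0
    exact (abs_add_le _ _).trans (by linarith)
  have hLu₂ : ∀ x y, |u₂ x - u₂ y| ≤ (ε⁻¹ * (CB * B₂ + CC * B₂)) * |x - y| := by
    intro x y
    have e1 : u₂ x - u₂ y = ε⁻¹ * ∫ s in (tau y)..(tau x),
        (-bt (1 - s) * u₂ s + ct (1 - s) * ∫ t in (0:ℝ)..s, u₂ t) := by
      rw [hu₂tau x, hu₂tau y, ← hq₂u _ (tau_mem x), ← hq₂u _ (tau_mem y), hq₂def]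
      simp only
      rw [← intervalIntegral.integral_interval_sub_left
        (hGc₂.intervalIntegrable (0:ℝ) (tau x)) (hGc₂.intervalIntegrable (0:ℝ) (tau y))]
      ring
    rw [e1, abs_mul, abs_of_nonneg (inv_nonneg.2 hε.le)]
    have h2 : |∫ s in (tau y)..(tau x),
        (-bt (1 - s) * u₂ s + ct (1 - s) * ∫ t in (0:ℝ)..s, u₂ t)|
        ≤ (CB * B₂ + CC * B₂) * |tau x - tau y| := by
      rw [← Real.norm_eq_abs]
      refine intervalIntegral.norm_integral_le_of_norm_le_const ?_
      intro s hs
      rw [Real.norm_eq_abs]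
      refine hGbd₂ s ?_
      rcases le_total (tau y) (tau x) with hc | hc
      · rw [uIoc_of_le hc] at hs
        exact ⟨(tau_nonneg y).trans hs.1.le, hs.2.trans (tau_le_one x)⟩
      · rw [uIoc_of_ge hc] at hs
        exact ⟨(tau_nonneg x).trans hs.1.le, hs.2.trans (tau_le_one y)⟩
    calc ε⁻¹ * |∫ s in (tau y)..(tau x),
          (-bt (1 - s) * u₂ s + ct (1 - s) * ∫ t in (0:ℝ)..s, u₂ t)|
        ≤ ε⁻¹ * ((CB * B₂ + CC * B₂) * |tau x - tau y|) :=
          mul_le_mul_of_nonneg_left h2 (inv_nonneg.2 hε.le)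
      _ ≤ ε⁻¹ * ((CB * B₂ + CC * B₂) * |x - y|) := by
          refine mul_le_mul_of_nonneg_left ?_ (inv_nonneg.2 hε.le)
          refine mul_le_mul_of_nonneg_left (tau_lip x y) (by positivity)
      _ = (ε⁻¹ * (CB * B₂ + CC * B₂)) * |x - y| := by ring
  have hLr : ∀ x y, |r x - r y| ≤ (ε⁻¹ * (CB * B₂ + CC * B₂)) * |x - y| := by
    intro x y
    rw [hrdef]
    simp only
    refine (hLu₂ (1 - x) (1 - y)).trans ?_
    have : |1 - x - (1 - y)| = |y - x| := by rw [show (1:ℝ) - x - (1 - y) = y - x by ring]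
    rw [this, abs_sub_comm y x]
  -- H function
  set H : ℝ → ℝ := fun x => ∫ s in x..(1:ℝ), ct s * vt s with hHdef
  have hvtc : Continuous vt := hvlip.continuous
  have hHd : ∀ x, HasDerivAt H (-(ct x * vt x)) x := by
    intro x
    have h1 : HasDerivAt (fun y => ∫ s in (1:ℝ)..y, ct s * vt s) (ct x * vt x) x :=
      ((hctc.mul hvtc).integral_hasStrictDerivAt 1 x).hasDerivAt
    have h2 : H = fun y => -(∫ s in (1:ℝ)..y, ct s * vt s) := by
      funext y
      rw [hHdef]
      simp only
      rw [← intervalIntegral.integral_symm]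
    rw [h2]
    exact h1.neg
  have hHc : Continuous H := continuous_iff_continuousAt.2 fun x => (hHd x).continuousAt
  have hH1 : H 1 = 0 := by rw [hHdef]; simp
  -- a.e. derivative facts on subintervals
  have hvt_ae : ∀ a b : ℝ, Ioo a b ⊆ Ioo (0:ℝ) 1 →
      (∀ᵐ x ∂(volume.restrict (Ioo a b)), HasDerivAt vt (v' x) x) :=
    fun a b hsub => ae_restrict_of_ae_restrict_of_subset hsub hv'ae
  have hx₀Icc : x₀ ∈ Icc (0:ℝ) 1 := ⟨hx₀.1.le, hx₀.2.le⟩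
  -- interior derivatives of u₁ and r
  have hu₁dint : ∀ x ∈ Ioo (0:ℝ) 1, HasDerivAt u₁ (q₁d x) x := by
    intro x hx
    refine (hq₁d x).congr_of_eventuallyEq ?_
    filter_upwards [Ioo_mem_nhds hx.1 hx.2] with y hy
    exact (hq₁u y ⟨hy.1.le, hy.2.le⟩).symm
  -- FTC for vt * u₁ on [0, x₀]
  set f₁d : ℝ → ℝ := fun x => v' x * u₁ x + vt x * q₁d x with hf₁ddef
  have hKv' : ∀ x y, |vt x - vt y| ≤ (Kv : ℝ) * |x - y| := by
    intro x y
    have := hvlip.dist_le_mul x y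
    rw [Real.dist_eq, Real.dist_eq] at this
    exact this
  have hf₁lip : LipschitzWith
      (Real.toNNReal (CV * (ε⁻¹ * (CB * B₁ + CC * B₁)) + B₁ * Kv)) (fun x => vt x * u₁ x) := by
    apply lipschitzWith_of_abs_sub_le
    intro x y
    have h1 := hKv' x y
    have h2 := hLu₁ x y
    have e : vt x * u₁ x - vt y * u₁ y = vt x * (u₁ x - u₁ y) + u₁ y * (vt x - vt y) := by ring
    rw [e]
    refine (abs_add_le _ _).trans ?_
    rw [abs_mul, abs_mul]
    have h3 : |vt x| * |u₁ x - u₁ y| ≤ CV * ((ε⁻¹ * (CB * B₁ + CC * B₁)) * |x - y|) :=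
      mul_le_mul (hCV x) h2 (abs_nonneg _) hCV0
    have h4 : |u₁ y| * |vt x - vt y| ≤ B₁ * ((Kv : ℝ) * |x - y|) :=
      mul_le_mul (hu₁bd y) h1 (abs_nonneg _) hB₁0
    nlinarith [abs_nonneg (x - y)]
  have hf₁ae : ∀ᵐ x ∂(volume.restrict (Ioo (0:ℝ) x₀)),
      HasDerivAt (fun y => vt y * u₁ y) (f₁d x) x := by
    filter_upwards [hvt_ae 0 x₀ (Ioo_subset_Ioo le_rfl hx₀.2.le),
      ae_restrict_mem measurableSet_Ioo] with x hx hxm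
    exact hx.mul (hu₁dint x ⟨hxm.1, hxm.2.trans hx₀.2⟩)
  obtain ⟨hint₁, hftc₁⟩ := ftc_ae_deriv' (fun x => vt x * u₁ x) f₁d _ hf₁lip hx₀.1.le hf₁ae
  have hftc₁' : ∫ x in (0:ℝ)..x₀, f₁d x = vt x₀ * u₁ x₀ := by
    rw [hftc₁, hv0]
    ring
  -- FTC for vt * r on [x₀, 1]
  set f₂d : ℝ → ℝ := fun x => v' x * r x + vt x * rd x with hf₂ddef
  have hf₂lip : LipschitzWith
      (Real.toNNReal (CV * (ε⁻¹ * (CB * B₂ + CC * B₂)) + B₂ * Kv)) (fun x => vt x * r x) := by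
    apply lipschitzWith_of_abs_sub_le
    intro x y
    have h1 := hKv' x y
    have h2 := hLr x y
    have e : vt x * r x - vt y * r y = vt x * (r x - r y) + r y * (vt x - vt y) := by ring
    rw [e]
    refine (abs_add_le _ _).trans ?_
    rw [abs_mul, abs_mul]
    have h3 : |vt x| * |r x - r y| ≤ CV * ((ε⁻¹ * (CB * B₂ + CC * B₂)) * |x - y|) :=
      mul_le_mul (hCV x) h2 (abs_nonneg _) hCV0
    have h4 : |r y| * |vt x - vt y| ≤ B₂ * ((Kv : ℝ) * |x - y|) :=
      mul_le_mul (hrbd y) h1 (abs_nonneg _) hB₂0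
    nlinarith [abs_nonneg (x - y)]
  have hf₂ae : ∀ᵐ x ∂(volume.restrict (Ioo x₀ (1:ℝ))),
      HasDerivAt (fun y => vt y * r y) (f₂d x) x := by
    filter_upwards [hvt_ae x₀ 1 (Ioo_subset_Ioo hx₀.1.le le_rfl),
      ae_restrict_mem measurableSet_Ioo] with x hx hxm
    exact hx.mul (hrd x ⟨hx₀.1.trans hxm.1, hxm.2⟩)
  obtain ⟨hint₂, hftc₂⟩ := ftc_ae_deriv' (fun x => vt x * r x) f₂d _ hf₂lip hx₀.2.le hf₂ae
  have hftc₂' : ∫ x in x₀..(1:ℝ), f₂d x = -(vt x₀ * r x₀) := by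
    rw [hftc₂, hv1]
    ring
  -- constants
  set D : ℝ := ε * (u₁ x₀ * Φ₂ x₀ + r x₀ * P₁ x₀) with hDdef
  have hD : 0 < D := by
    have h1 := hu₁pos x₀
    have h2 := hΦ₂pos
    have h3 := (hrpos x₀ hx₀Icc)
    have h4 := hP₁nn x₀ hx₀.1.le
    rw [hDdef]
    have h5 : Φ₂ x₀ ≤ u₁ x₀ * Φ₂ x₀ := le_mul_of_one_le_left h2.le h1
    have h6 : 0 ≤ r x₀ * P₁ x₀ := mul_nonneg h3.le h4
    exact mul_pos hε (by linarith)
  set A : ℝ := Φ₂ x₀ / D with hAdef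
  set Bc : ℝ := P₁ x₀ / D with hBcdef
  have hA0 : 0 ≤ A := div_nonneg (hΦ₂nn x₀ hx₀Icc) hD.le
  have hBc0 : 0 ≤ Bc := div_nonneg (hP₁nn x₀ hx₀.1.le) hD.le
  set Fc : ℝ → ℝ := fun x => ε * v' x + bt x * vt x + H x + κ with hFcdef
  have hMae' : ∀ᵐ x ∂(volume.restrict (Icc (0:ℝ) 1)), |Fc x| ≤ M := hMae
  -- decompositions
  have hdec₁ : ∀ x, Fc x * (A * u₁ x)
      = (A * ε) * f₁d x + A * (H x * u₁ x - ct x * vt x * P₁ x + κ * u₁ x) := by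
    intro x
    rw [hFcdef, hf₁ddef, hq₁ddef]
    simp only
    field_simp
    ring
  have hdec₂ : ∀ x, Fc x * (-(Bc * r x))
      = (-(Bc * ε)) * f₂d x + (-Bc) * (ct x * vt x * Φ₂ x + H x * r x + κ * r x) := by
    intro x
    rw [hFcdef, hf₂ddef, hrddef]
    simp only
    field_simp
    ring
  have hg₁c : Continuous (fun x => H x * u₁ x - ct x * vt x * P₁ x + κ * u₁ x) :=
    ((hHc.mul hu₁c).sub ((hctc.mul hvtc).mul hP₁c)).add (continuous_const.mul hu₁c)
  have hg₂c : Continuous (fun x => ct x * vt x * Φ₂ x + H x * r x + κ * r x) :=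
    (((hctc.mul hvtc).mul hΦ₂c).add (hHc.mul hrc)).add (continuous_const.mul hrc)
  have hJ₁int : IntervalIntegrable (fun x => Fc x * (A * u₁ x)) volume 0 x₀ := by
    have h := (hint₁.const_mul (A * ε)).add
      ((hg₁c.intervalIntegrable (0:ℝ) x₀).const_mul A)
    have e : (fun x => Fc x * (A * u₁ x))
        = fun x => (A * ε) * f₁d x + A * (H x * u₁ x - ct x * vt x * P₁ x + κ * u₁ x) :=
      funext hdec₁
    rw [e]
    exact h
  have hJ₂int : IntervalIntegrable (fun x => Fc x * (-(Bc * r x))) volume x₀ 1 := by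
    have h := (hint₂.const_mul (-(Bc * ε))).add
      ((hg₂c.intervalIntegrable x₀ (1:ℝ)).const_mul (-Bc))
    have e : (fun x => Fc x * (-(Bc * r x)))
        = fun x => (-(Bc * ε)) * f₂d x + (-Bc) * (ct x * vt x * Φ₂ x + H x * r x + κ * r x) :=
      funext hdec₂
    rw [e]
    exact h
  -- value of I₁
  have hI₁ : ∫ x in (0:ℝ)..x₀, Fc x * (A * u₁ x)
      = (A * ε) * (vt x₀ * u₁ x₀) + A * (H x₀ * P₁ x₀ + κ * P₁ x₀) := by
    rw [funext hdec₁]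
    rw [intervalIntegral.integral_add (hint₁.const_mul (A * ε))
      ((hg₁c.intervalIntegrable (0:ℝ) x₀).const_mul A)]
    rw [intervalIntegral.integral_const_mul, intervalIntegral.integral_const_mul, hftc₁']
    congr 1
    have hΨd : ∀ x, HasDerivAt (fun y => H y * P₁ y + κ * P₁ y)
        (H x * u₁ x - ct x * vt x * P₁ x + κ * u₁ x) x := by
      intro x
      have h1 := (hHd x).mul (hP₁d x)
      have h2 := (hP₁d x).const_mul κ
      have h3 := h1.add h2
      have e : -(ct x * vt x) * P₁ x + H x * u₁ x + κ * u₁ x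
          = H x * u₁ x - ct x * vt x * P₁ x + κ * u₁ x := by ring
      rwa [e] at h3
    rw [intervalIntegral.integral_eq_sub_of_hasDerivAt (fun x _ => hΨd x)
      (hg₁c.intervalIntegrable (0:ℝ) x₀)]
    have hP₁0 : P₁ 0 = 0 := intervalIntegral.integral_same
    rw [hP₁0]
    ring
  -- value of I₂
  have hI₂ : ∫ x in x₀..(1:ℝ), Fc x * (-(Bc * r x))
      = (-(Bc * ε)) * (-(vt x₀ * r x₀)) + (-Bc) * (H x₀ * Φ₂ x₀ + κ * Φ₂ x₀) := by
    rw [funext hdec₂]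
    rw [intervalIntegral.integral_add (hint₂.const_mul (-(Bc * ε)))
      ((hg₂c.intervalIntegrable x₀ (1:ℝ)).const_mul (-Bc))]
    rw [intervalIntegral.integral_const_mul, intervalIntegral.integral_const_mul, hftc₂']
    congr 1
    have hΨd : ∀ x, HasDerivAt (fun y => -(H y * Φ₂ y) - κ * Φ₂ y)
        (ct x * vt x * Φ₂ x + H x * r x + κ * r x) x := by
      intro x
      have h1 := ((hHd x).mul (hΦ₂d x)).neg
      have h2 := ((hΦ₂d x).const_mul κ).neg
      have h3 := h1.add h2
      have e : -(-(ct x * vt x) * Φ₂ x + H x * -(r x)) + -(κ * -(r x))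
          = ct x * vt x * Φ₂ x + H x * r x + κ * r x := by ring
      rwa [e] at h3
      -- note: (fun y => -(H y * Φ₂ y)) + (fun y => -(κ * Φ₂ y)) vs target; handled below
    rw [intervalIntegral.integral_eq_sub_of_hasDerivAt (fun x _ => hΨd x)
      (hg₂c.intervalIntegrable x₀ (1:ℝ))]
    have hΦ₂1 : Φ₂ 1 = 0 := intervalIntegral.integral_same
    rw [hΦ₂1, hH1]
    ring
  -- the exact identity
  have hDne : D ≠ 0 := ne_of_gt hD
  have hAB : A * P₁ x₀ - Bc * Φ₂ x₀ = 0 := by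
    rw [hAdef, hBcdef]
    ring
  have hnorm : ε * (A * u₁ x₀ + Bc * r x₀) = 1 := by
    rw [hAdef, hBcdef]
    field_simp [hDne]
    rw [hDdef]
    ring
  have hsum : (∫ x in (0:ℝ)..x₀, Fc x * (A * u₁ x))
      + (∫ x in x₀..(1:ℝ), Fc x * (-(Bc * r x))) = vt x₀ := by
    rw [hI₁, hI₂]
    linear_combination (vt x₀) * hnorm + (H x₀ + κ) * hAB
  -- bounds for I₁
  have hleI₁ : |∫ x in (0:ℝ)..x₀, Fc x * (A * u₁ x)| ≤ M * (A * P₁ x₀) := by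
    have hboundc : Continuous (fun x => M * A * u₁ x) := continuous_const.mul hu₁c
    have haeIcc : ∀ᵐ x ∂(volume.restrict (Icc (0:ℝ) x₀)), |Fc x| ≤ M :=
      ae_restrict_of_ae_restrict_of_subset (Icc_subset_Icc le_rfl hx₀.2.le) hMae'
    have hup : (∫ x in (0:ℝ)..x₀, Fc x * (A * u₁ x)) ≤ ∫ x in (0:ℝ)..x₀, M * A * u₁ x := by
      refine intervalIntegral.integral_mono_ae_restrict hx₀.1.le hJ₁int
        (hboundc.intervalIntegrable _ _) ?_
      filter_upwards [haeIcc] with x hx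
      have h1 : Fc x ≤ M := le_of_abs_le hx
      have h2 : 0 ≤ A * u₁ x := mul_nonneg hA0 (hu₁nn x)
      nlinarith
    have hlo : (∫ x in (0:ℝ)..x₀, -(M * A * u₁ x)) ≤ ∫ x in (0:ℝ)..x₀, Fc x * (A * u₁ x) := by
      refine intervalIntegral.integral_mono_ae_restrict hx₀.1.le
        (hboundc.neg.intervalIntegrable _ _) hJ₁int ?_
      filter_upwards [haeIcc] with x hx
      have h1 : -M ≤ Fc x := neg_le_of_abs_le hx
      have h2 : 0 ≤ A * u₁ x := mul_nonneg hA0 (hu₁nn x)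
      nlinarith
    have hval : ∫ x in (0:ℝ)..x₀, M * A * u₁ x = M * (A * P₁ x₀) := by
      rw [show (fun x => M * A * u₁ x) = fun x => (M * A) * u₁ x from rfl,
        intervalIntegral.integral_const_mul]
      rw [hP₁def]
      ring
    rw [intervalIntegral.integral_neg, hval] at hlo
    rw [hval] at hup
    exact abs_le.2 ⟨hlo, hup⟩
  -- bounds for I₂
  have hleI₂ : |∫ x in x₀..(1:ℝ), Fc x * (-(Bc * r x))| ≤ M * (Bc * Φ₂ x₀) := by
    have hboundc : Continuous (fun x => M * Bc * r x) := continuous_const.mul hrc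
    have haeIcc : ∀ᵐ x ∂(volume.restrict (Icc x₀ (1:ℝ))), |Fc x| ≤ M :=
      ae_restrict_of_ae_restrict_of_subset (Icc_subset_Icc hx₀.1.le le_rfl) hMae'
    have haeIccmem : ∀ᵐ x ∂(volume.restrict (Icc x₀ (1:ℝ))), x ∈ Icc x₀ (1:ℝ) :=
      ae_restrict_mem measurableSet_Icc
    have hup : (∫ x in x₀..(1:ℝ), Fc x * (-(Bc * r x))) ≤ ∫ x in x₀..(1:ℝ), M * Bc * r x := by
      refine intervalIntegral.integral_mono_ae_restrict hx₀.2.le hJ₂int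
        (hboundc.intervalIntegrable _ _) ?_
      filter_upwards [haeIcc, haeIccmem] with x hx hxm
      have h1 : -M ≤ Fc x := neg_le_of_abs_le hx
      have h2 : 0 ≤ Bc * r x :=
        mul_nonneg hBc0 (hrpos x ⟨hx₀.1.le.trans hxm.1, hxm.2⟩).le
      nlinarith
    have hlo : (∫ x in x₀..(1:ℝ), -(M * Bc * r x)) ≤ ∫ x in x₀..(1:ℝ), Fc x * (-(Bc * r x)) := by
      refine intervalIntegral.integral_mono_ae_restrict hx₀.2.le
        (hboundc.neg.intervalIntegrable _ _) hJ₂int ?_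
      filter_upwards [haeIcc, haeIccmem] with x hx hxm
      have h1 : Fc x ≤ M := le_of_abs_le hx
      have h2 : 0 ≤ Bc * r x :=
        mul_nonneg hBc0 (hrpos x ⟨hx₀.1.le.trans hxm.1, hxm.2⟩).le
      nlinarith
    have hval : ∫ x in x₀..(1:ℝ), M * Bc * r x = M * (Bc * Φ₂ x₀) := by
      rw [show (fun x => M * Bc * r x) = fun x => (M * Bc) * r x from rfl,
        intervalIntegral.integral_const_mul]
      rw [hΦ₂def]
      ring
    rw [intervalIntegral.integral_neg, hval] at hlo
    rw [hval] at hup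
    exact abs_le.2 ⟨hlo, hup⟩
  -- conclusion
  have htri : |vt x₀| ≤ M * (A * P₁ x₀) + M * (Bc * Φ₂ x₀) := by
    rw [← hsum]
    exact (abs_add_le _ _).trans (add_le_add hleI₁ hleI₂)
  have hkey₀ := hkey x₀ hx₀Icc
  have h7 : β * (P₁ x₀ * Φ₂ x₀) ≤ D := by
    have h8 := mul_le_mul_of_nonneg_right hkey₀ (hΦ₂nn x₀ hx₀Icc)
    have h9 : 0 ≤ ε * (r x₀ * P₁ x₀) :=
      mul_nonneg hε.le (mul_nonneg (hrpos x₀ hx₀Icc).le (hP₁nn x₀ hx₀.1.le))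
    rw [hDdef]
    nlinarith
  have hABsum : A * P₁ x₀ + Bc * Φ₂ x₀ = 2 * (P₁ x₀ * Φ₂ x₀) / D := by
    rw [hAdef, hBcdef]
    ring
  have h8 : 2 * (P₁ x₀ * Φ₂ x₀) / D ≤ 2 / β := by
    rw [div_le_div_iff₀ hD hβ]
    nlinarith
  calc |vt x₀| ≤ M * (A * P₁ x₀) + M * (Bc * Φ₂ x₀) := htri
    _ = M * (A * P₁ x₀ + Bc * Φ₂ x₀) := by ring
    _ = M * (2 * (P₁ x₀ * Φ₂ x₀) / D) := by rw [hABsum]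
    _ ≤ M * (2 / β) := mul_le_mul_of_nonneg_left h8 hM0
    _ = 2 / β * M := by ring



/-- stability bound (a) for the operator
`(Av)(x) = ε v'(x) + b(x) v(x) + ∫_x^1 c v` on `W₀^{1,∞}(0,1)`:
`‖v‖_∞ ≤ (2/β) ‖Av + κ‖_∞` for every constant `κ`. -/
theorem stmt0
    (ε β : ℝ) (hε : 0 < ε) (hβ : 0 < β)
    (b c b' : ℝ → ℝ)
    (hb : ContinuousOn b (Icc 0 1)) (hc : ContinuousOn c (Icc 0 1))
    (hbderiv : ∀ x ∈ Icc (0:ℝ) 1, HasDerivAt b (b' x) x)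
    (hbβ : ∀ x ∈ Icc (0:ℝ) 1, β ≤ b x)
    (hc0 : ∀ x ∈ Icc (0:ℝ) 1, 0 ≤ c x)
    (hcb : ∀ x ∈ Icc (0:ℝ) 1, 0 ≤ c x - b' x)
    -- v ∈ W₀^{1,∞}(0,1): Lipschitz on [0,1], a.e. differentiable with derivative v',
    -- vanishing at the endpoints
    (v v' : ℝ → ℝ) (K : NNReal) (hlip : LipschitzOnWith K v (Icc 0 1))
    (hv' : ∀ᵐ x ∂(volume.restrict (Icc (0:ℝ) 1)), HasDerivAt v (v' x) x)
    (hv0 : v 0 = 0) (hv1 : v 1 = 0)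
    (κ M : ℝ)
    -- M is an essential bound for |Av + κ| on [0,1]
    (hM : ∀ᵐ x ∂(volume.restrict (Icc (0:ℝ) 1)),
        |ε * v' x + b x * v x + (∫ s in x..(1:ℝ), c s * v s) + κ| ≤ M) :
    ∀ t ∈ Icc (0:ℝ) 1, |v t| ≤ 2 / β * M := by
  have hM0 : 0 ≤ M := by
    have hne : (volume.restrict (Icc (0:ℝ) 1)) ≠ 0 := by
      intro h
      have h2 := Measure.restrict_eq_zero.mp h
      rw [Real.volume_Icc] at h2
      norm_num at h2
    haveI := ae_neBot.2 hne
    obtain ⟨x, hx⟩ := hM.exists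
    exact (abs_nonneg _).trans hx
  set vt : ℝ → ℝ := fun x => v (tau x) with hvtdef
  set bt : ℝ → ℝ := fun x => b (tau x) with hbtdef
  set ct : ℝ → ℝ := fun x => c (tau x) with hctdef
  have hbtc : Continuous bt := hb.comp_continuous tau_continuous tau_mem
  have hctc : Continuous ct := hc.comp_continuous tau_continuous tau_mem
  have hvlip : LipschitzWith K vt := by
    apply LipschitzWith.of_dist_le_mul
    intro x y
    have h1 := hlip.dist_le_mul _ (tau_mem x) _ (tau_mem y)
    refine h1.trans ?_
    rw [Real.dist_eq, Real.dist_eq]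
    exact mul_le_mul_of_nonneg_left (tau_lip x y) K.coe_nonneg
  obtain ⟨CB, hCB'⟩ := isCompact_Icc.exists_bound_of_continuousOn (s := Icc (0:ℝ) 1) hb
  obtain ⟨CC, hCC'⟩ := isCompact_Icc.exists_bound_of_continuousOn (s := Icc (0:ℝ) 1) hc
  obtain ⟨CV, hCV'⟩ := isCompact_Icc.exists_bound_of_continuousOn (s := Icc (0:ℝ) 1)
    hlip.continuousOn
  have hCB : ∀ x, |bt x| ≤ CB := fun x => hCB' _ (tau_mem x)
  have hCC : ∀ x, |ct x| ≤ CC := fun x => hCC' _ (tau_mem x)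
  have hCV : ∀ x, |vt x| ≤ CV := fun x => hCV' _ (tau_mem x)
  have hbtβ : ∀ x, β ≤ bt x := fun x => hbβ _ (tau_mem x)
  have hct0 : ∀ x, 0 ≤ ct x := fun x => hc0 _ (tau_mem x)
  have hv'ae : ∀ᵐ x ∂(volume.restrict (Ioo (0:ℝ) 1)), HasDerivAt vt (v' x) x := by
    filter_upwards [ae_restrict_of_ae_restrict_of_subset Ioo_subset_Icc_self hv',
      ae_restrict_mem measurableSet_Ioo] with x hx hxm
    refine hx.congr_of_eventuallyEq ?_
    filter_upwards [Ioo_mem_nhds hxm.1 hxm.2] with y hy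
    show vt y = v y
    rw [hvtdef]
    simp only
    rw [tau_eq_self ⟨hy.1.le, hy.2.le⟩]
  have hvt0 : vt 0 = 0 := by
    rw [hvtdef]
    simp only
    rw [tau_eq_self ⟨le_refl _, zero_le_one⟩]
    exact hv0
  have hvt1 : vt 1 = 0 := by
    rw [hvtdef]
    simp only
    rw [tau_eq_self ⟨zero_le_one, le_refl _⟩]
    exact hv1
  have hMae : ∀ᵐ x ∂(volume.restrict (Icc (0:ℝ) 1)),
      |ε * v' x + bt x * vt x + (∫ s in x..(1:ℝ), ct s * vt s) + κ| ≤ M := by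
    filter_upwards [hM, ae_restrict_mem measurableSet_Icc] with x hx hxm
    have e1 : bt x = b x := by rw [hbtdef]; simp only; rw [tau_eq_self hxm]
    have e2 : vt x = v x := by rw [hvtdef]; simp only; rw [tau_eq_self hxm]
    have e3 : (∫ s in x..(1:ℝ), ct s * vt s) = ∫ s in x..(1:ℝ), c s * v s := by
      refine intervalIntegral.integral_congr ?_
      intro s hs
      rw [uIcc_of_le hxm.2] at hs
      have hs' : s ∈ Icc (0:ℝ) 1 := ⟨hxm.1.trans hs.1, hs.2⟩
      show ct s * vt s = c s * v s
      rw [hctdef, hvtdef]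
      simp only
      rw [tau_eq_self hs']
    rw [e1, e2, e3]
    exact hx
  intro t ht
  rcases eq_or_lt_of_le ht.1 with h0 | h0
  · rw [← h0, hv0, abs_zero]
    positivity
  rcases eq_or_lt_of_le ht.2 with h1 | h1
  · rw [h1, hv1, abs_zero]
    positivity
  have hmain := main_aux ε β hε hβ bt ct hbtc hctc CB CC hCB hCC hbtβ hct0
    vt v' K hvlip CV hCV hv'ae hvt0 hvt1 κ M hM0 hMae t ⟨h0, h1⟩
  have e2 : vt t = v t := by rw [hvtdef]; simp only; rw [tau_eq_self ht]
  rwa [e2] at hmain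
end

section
/- Let ψ ∈ C[0,1] and on each mesh interval I_i = (x_{i−1},x_i) define ψ̂(x) = ψ_{i−1/2} + (x − x_{i−1/2})(ψ_i − ψ_{i−1})/h_i. If ψ ∈ C³[0,1], then for each i, | ∫_{x_{i−1}}^{x_i} (ψ(s) − ψ̂(s)) ds − h_i (ψ_i − 2ψ_{i−1/2} + ψ_{i−1})/6 | ≤ C h_i⁴ ‖ψ‴‖_{∞}, for a constant C independent of the mesh and ψ. -/
open Set MeasureTheory

open intervalIntegral in

lemma taylor_step (f f' : ℝ → ℝ) (c : ℝ) (n : ℕ) (m : ℝ)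
    (hm : m ∈ Icc (0:ℝ) 1) (hc : 0 ≤ c)
    (hder : ∀ t ∈ Icc (0:ℝ) 1, HasDerivAt f (f' t) t)
    (hcont : ContinuousOn f' (Icc 0 1))
    (hfm : f m = 0)
    (hbound : ∀ t ∈ Icc (0:ℝ) 1, |f' t| ≤ c * |t - m| ^ n) :
    ∀ t ∈ Icc (0:ℝ) 1, |f t| ≤ c * |t - m| ^ (n + 1) / (n + 1) := by
  intro t ht
  have hsub : uIcc m t ⊆ Icc 0 1 := uIcc_subset_Icc hm ht
  have hint : IntervalIntegrable f' volume m t :=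
    (hcont.mono hsub).intervalIntegrable
  have hftc : f t = ∫ s in m..t, f' s := by
    rw [integral_eq_sub_of_hasDerivAt (fun x hx => hder x (hsub hx)) hint, hfm, sub_zero]
  have hn1 : (0:ℝ) < (n:ℝ) + 1 := by positivity
  rcases le_total m t with hmt | htm
  · have hIcc : Icc m t ⊆ Icc 0 1 := by rwa [uIcc_of_le hmt] at hsub
    have key : |∫ s in m..t, f' s| ≤ ∫ s in m..t, c * (s - m) ^ n := by
      refine (abs_integral_le_integral_abs hmt).trans ?_
      refine integral_mono_on hmt hint.abs ?_ ?_
      · exact (continuous_const.mul ((continuous_id.sub continuous_const).pow n)).intervalIntegrable m t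
      · intro s hs
        have := hbound s (hIcc hs)
        rwa [abs_of_nonneg (by linarith [hs.1] : (0:ℝ) ≤ s - m)] at this
    have hval : ∫ s in m..t, c * (s - m) ^ n = c * (t - m) ^ (n + 1) / (n + 1) := by
      rw [intervalIntegral.integral_const_mul]
      have h2 : ∫ s in m..t, (s - m) ^ n = (t - m) ^ (n + 1) / ((n:ℝ) + 1) := by
        have := intervalIntegral.integral_comp_sub_right (fun x => x ^ n) m (a := m) (b := t)
        rw [this, sub_self, integral_pow]; push_cast; ring
      rw [h2]; push_cast; ring
    rw [hftc, abs_of_nonneg (by linarith : (0:ℝ) ≤ t - m)]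
    calc |∫ s in m..t, f' s| ≤ c * (t - m) ^ (n+1) / (n+1) := hval ▸ key
      _ = c * (t - m) ^ (n+1) / ((n:ℝ)+1) := by push_cast; ring
  · have hIcc : Icc t m ⊆ Icc 0 1 := by rwa [uIcc_of_ge htm] at hsub
    have key : |∫ s in t..m, f' s| ≤ ∫ s in t..m, c * (m - s) ^ n := by
      refine (abs_integral_le_integral_abs htm).trans ?_
      refine integral_mono_on htm hint.symm.abs ?_ ?_
      · exact (continuous_const.mul ((continuous_const.sub continuous_id).pow n)).intervalIntegrable t m
      · intro s hs
        have := hbound s (hIcc hs)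
        rwa [abs_sub_comm, abs_of_nonneg (by linarith [hs.2] : (0:ℝ) ≤ m - s)] at this
    have hval : ∫ s in t..m, c * (m - s) ^ n = c * (m - t) ^ (n + 1) / (n + 1) := by
      rw [intervalIntegral.integral_const_mul]
      have h2 : ∫ s in t..m, (m - s) ^ n = (m - t) ^ (n + 1) / ((n:ℝ) + 1) := by
        have := intervalIntegral.integral_comp_sub_left (fun x => x ^ n) m (a := t) (b := m)
        rw [this, sub_self, integral_pow]; push_cast; ring
      rw [h2]; push_cast; ring
    rw [hftc, ← abs_neg, ← intervalIntegral.integral_symm, abs_sub_comm,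
      abs_of_nonneg (by linarith : (0:ℝ) ≤ m - t)]
    calc |∫ s in t..m, f' s| ≤ c * (m - t) ^ (n+1) / (n+1) := hval ▸ key
      _ = c * (m - t) ^ (n+1) / ((n:ℝ)+1) := by push_cast; ring


set_option maxHeartbeats 2000000 in
theorem stmt9_main
    (ψ ψ' ψ'' ψ''' : ℝ → ℝ) (p q M : ℝ)
    (hpq : p < q) (hIcc : Icc p q ⊆ Icc 0 1)
    (hd1 : ∀ t ∈ Icc (0:ℝ) 1, HasDerivAt ψ (ψ' t) t)
    (hd2 : ∀ t ∈ Icc (0:ℝ) 1, HasDerivAt ψ' (ψ'' t) t)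
    (hd3 : ∀ t ∈ Icc (0:ℝ) 1, HasDerivAt ψ'' (ψ''' t) t)
    (hc3 : ContinuousOn ψ''' (Icc 0 1))
    (hM : ∀ t ∈ Icc (0:ℝ) 1, |ψ''' t| ≤ M) :
    |(∫ s in p..q, (ψ s - (ψ ((p + q) / 2)
          + (s - (p + q) / 2) * ((ψ q - ψ p) / (q - p)))))
        - (q - p) * (ψ q - 2 * ψ ((p + q) / 2) + ψ p) / 6|
      ≤ 1 * (q - p) ^ 4 * M := by
  set m : ℝ := (p + q) / 2 with hm_def
  have hmpq : m ∈ Icc p q := ⟨by simp only [hm_def]; linarith, by simp only [hm_def]; linarith⟩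
  have hm01 : m ∈ Icc (0:ℝ) 1 := hIcc hmpq
  have hp01 : p ∈ Icc (0:ℝ) 1 := hIcc ⟨le_refl p, hpq.le⟩
  have hq01 : q ∈ Icc (0:ℝ) 1 := hIcc ⟨hpq.le, le_refl q⟩
  have hM0 : 0 ≤ M := le_trans (abs_nonneg _) (hM 0 ⟨le_refl 0, zero_le_one⟩)
  have hne : q - p ≠ 0 := by linarith
  -- continuity
  have hcψ : ContinuousOn ψ (Icc 0 1) := fun t ht => (hd1 t ht).continuousAt.continuousWithinAt
  have hcψ' : ContinuousOn ψ' (Icc 0 1) := fun t ht => (hd2 t ht).continuousAt.continuousWithinAt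
  have hcψ'' : ContinuousOn ψ'' (Icc 0 1) := fun t ht => (hd3 t ht).continuousAt.continuousWithinAt
  -- Taylor remainders
  set R2 : ℝ → ℝ := fun s => ψ'' s - ψ'' m with hR2_def
  have hdR2 : ∀ t ∈ Icc (0:ℝ) 1, HasDerivAt R2 (ψ''' t) t := fun t ht => (hd3 t ht).sub_const _
  have hbR2 := taylor_step R2 ψ''' M 0 m hm01 hM0 hdR2 hc3 (by simp [hR2_def])
    (fun t ht => by simpa using hM t ht)
  set R1 : ℝ → ℝ := fun s => ψ' s - ψ' m - ψ'' m * (s - m) with hR1_def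
  have hdR1 : ∀ t ∈ Icc (0:ℝ) 1, HasDerivAt R1 (R2 t) t := by
    intro t ht
    have h1 : HasDerivAt (fun s => ψ'' m * (s - m)) (ψ'' m) t := by
      simpa using (((hasDerivAt_id t).sub_const m).const_mul (ψ'' m))
    exact ((hd2 t ht).sub_const (ψ' m)).sub h1
  have hcR2 : ContinuousOn R2 (Icc 0 1) := hcψ''.sub continuousOn_const
  have hbR1 := taylor_step R1 R2 M 1 m hm01 hM0 hdR1 hcR2 (by simp [hR1_def])
    (fun t ht => by have := hbR2 t ht; push_cast at this ⊢; linarith)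
  set R : ℝ → ℝ := fun s => ψ s - ψ m - ψ' m * (s - m) - ψ'' m * (s - m) ^ 2 / 2 with hR_def
  have hdR : ∀ t ∈ Icc (0:ℝ) 1, HasDerivAt R (R1 t) t := by
    intro t ht
    have hb : HasDerivAt (fun s : ℝ => s - m) 1 t := (hasDerivAt_id t).sub_const m
    have h1 : HasDerivAt (fun s => ψ' m * (s - m)) (ψ' m) t := by
      simpa using hb.const_mul (ψ' m)
    have h2 : HasDerivAt (fun s => ψ'' m * (s - m) ^ 2 / 2) (ψ'' m * (t - m)) t := by
      have := ((hb.pow 2).const_mul (ψ'' m)).div_const 2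
      exact this.congr_deriv (by push_cast; ring)
    have := (((hd1 t ht).sub_const (ψ m)).sub h1).sub h2
    exact this
  have hcR1 : ContinuousOn R1 (Icc 0 1) :=
    (hcψ'.sub continuousOn_const).sub (continuousOn_const.mul
      ((continuous_id.sub continuous_const).continuousOn))
  have hbR := taylor_step R R1 (M / 2) 2 m hm01 (by linarith) hdR hcR1 (by simp [hR_def])
    (fun t ht => by have := hbR1 t ht; push_cast at this ⊢; nlinarith [abs_nonneg (t - m), sq_abs (t - m)])
  -- uniform bound on [p,q]
  have hbnd : ∀ s ∈ Icc p q, |R s| ≤ M * (q - p) ^ 3 / 48 := by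
    intro s hs
    have hsm : |s - m| ≤ (q - p) / 2 := by
      rw [abs_le, hm_def]; constructor <;> [linarith [hs.1, hs.2]; linarith [hs.1, hs.2]]
    have h3 : |s - m| ^ 3 ≤ ((q - p) / 2) ^ 3 := by
      exact pow_le_pow_left₀ (abs_nonneg _) hsm 3
    have hstep := hbR s (hIcc hs)
    push_cast at hstep
    have h4 : M / 2 * |s - m| ^ 3 ≤ M / 2 * ((q - p) / 2) ^ 3 :=
      mul_le_mul_of_nonneg_left h3 (by linarith)
    calc |R s| ≤ M / 2 * |s - m| ^ (2+1) / (2+1) := hstep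
      _ ≤ (M / 2) * ((q - p) / 2) ^ 3 / 3 := by norm_num; linarith
      _ = M * (q - p) ^ 3 / 48 := by ring
  -- split integrand
  set slope : ℝ := (ψ q - ψ p) / (q - p) with hslope_def
  set Q : ℝ → ℝ := fun s => (ψ' m - slope) * (s - m) + (ψ'' m / 2) * (s - m) ^ 2 with hQ_def
  have hsub : uIcc p q ⊆ Icc 0 1 := by rw [uIcc_of_le hpq.le]; exact hIcc
  have hcQ : Continuous Q := by
    simp only [hQ_def]
    exact (continuous_const.mul (continuous_id.sub continuous_const)).add
      (continuous_const.mul ((continuous_id.sub continuous_const).pow 2))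
  have hintR : IntervalIntegrable R volume p q := by
    refine ContinuousOn.intervalIntegrable ?_
    refine ContinuousOn.sub (ContinuousOn.sub (ContinuousOn.sub (hcψ.mono hsub)
      continuousOn_const) ?_) ?_
    · exact (continuous_const.mul (continuous_id.sub continuous_const)).continuousOn
    · exact ((continuous_const.mul ((continuous_id.sub continuous_const).pow 2)).div_const 2).continuousOn
  have hsplit : (∫ s in p..q, (ψ s - (ψ m + (s - m) * slope)))
      = (∫ s in p..q, R s) + ∫ s in p..q, Q s := by
    rw [← intervalIntegral.integral_add hintR (hcQ.intervalIntegrable p q)]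
    refine intervalIntegral.integral_congr ?_
    intro s _
    simp only [hR_def, hQ_def]
    ring
  -- value of ∫ Q
  set G : ℝ → ℝ := fun s => (ψ' m - slope) * (s - m) ^ 2 / 2 + (ψ'' m / 2) * (s - m) ^ 3 / 3
    with hG_def
  have hdG : ∀ s : ℝ, HasDerivAt G (Q s) s := by
    intro s
    have hb : HasDerivAt (fun x : ℝ => x - m) 1 s := (hasDerivAt_id s).sub_const m
    have h1 := ((hb.pow 2).const_mul (ψ' m - slope)).div_const 2
    have h2 := ((hb.pow 3).const_mul (ψ'' m / 2)).div_const 3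
    have := h1.add h2
    exact this.congr_deriv (by simp only [hQ_def]; push_cast; ring)
  have hQint : (∫ s in p..q, Q s) = G q - G p :=
    intervalIntegral.integral_eq_sub_of_hasDerivAt (fun s _ => hdG s)
      (hcQ.intervalIntegrable p q)
  -- algebraic identity
  have halg : G q - G p - (q - p) * (ψ q - 2 * ψ m + ψ p) / 6
      = -((q - p) * (R q + R p) / 6) := by
    simp only [hG_def, hR_def, hslope_def, hm_def]
    field_simp
    ring
  -- final bound
  have hEq : (∫ s in p..q, (ψ s - (ψ m + (s - m) * slope)))
        - (q - p) * (ψ q - 2 * ψ m + ψ p) / 6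
      = (∫ s in p..q, R s) - (q - p) * (R q + R p) / 6 := by
    rw [hsplit, hQint]; linarith [halg]
  rw [hEq]
  have hIR : |∫ s in p..q, R s| ≤ M * (q - p) ^ 3 / 48 * |q - p| := by
    have key : ‖∫ s in p..q, R s‖ ≤ M * (q - p) ^ 3 / 48 * |q - p| := by
      refine intervalIntegral.norm_integral_le_of_norm_le_const ?_
      intro x hx
      rw [uIoc_of_le hpq.le] at hx
      simpa [Real.norm_eq_abs] using hbnd x ⟨hx.1.le, hx.2⟩
    simpa [Real.norm_eq_abs] using key
  have hRq : |R q| ≤ M * (q - p) ^ 3 / 48 := hbnd q ⟨hpq.le, le_refl q⟩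
  have hRp : |R p| ≤ M * (q - p) ^ 3 / 48 := hbnd p ⟨le_refl p, hpq.le⟩
  have habs : |q - p| = q - p := abs_of_pos (by linarith)
  have h4 : 0 < (q - p) ^ 4 := by positivity
  calc |(∫ s in p..q, R s) - (q - p) * (R q + R p) / 6|
      ≤ |∫ s in p..q, R s| + |(q - p) * (R q + R p) / 6| := abs_sub _ _
    _ ≤ M * (q - p) ^ 3 / 48 * (q - p) + (q - p) * (M * (q - p) ^ 3 / 48 * 2) / 6 := by
        rw [habs] at hIR
        refine add_le_add hIR ?_
        rw [abs_div, abs_mul, habs]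
        have : |R q + R p| ≤ M * (q - p) ^ 3 / 48 * 2 := by
          calc |R q + R p| ≤ |R q| + |R p| := abs_add_le _ _
            _ ≤ _ := by linarith
        calc (q - p) * |R q + R p| / |6| = (q - p) * |R q + R p| / 6 := by norm_num
          _ ≤ (q - p) * (M * (q - p) ^ 3 / 48 * 2) / 6 := by
              apply div_le_div_of_nonneg_right ?_ (by norm_num)
              exact mul_le_mul_of_nonneg_left this (by linarith)
    _ ≤ 1 * (q - p) ^ 4 * M := by nlinarith [h4, hM0]

/-- the Simpson-rule evaluation `h_i(ψ_i - 2ψ_{i-1/2} + ψ_{i-1})/6` of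
`∫_{I_i}(ψ - ψ̂)` is accurate to order `h_i⁴ ‖ψ‴‖_∞` for `ψ ∈ C³[0,1]`, with a constant
`C` independent of the mesh interval and of `ψ`. -/
theorem stmt9 :
    ∃ C : ℝ, 0 < C ∧
      ∀ (ψ ψ' ψ'' ψ''' : ℝ → ℝ) (p q M : ℝ),
        p < q → Icc p q ⊆ Icc 0 1 →
        (∀ t ∈ Icc (0:ℝ) 1, HasDerivAt ψ (ψ' t) t) →
        (∀ t ∈ Icc (0:ℝ) 1, HasDerivAt ψ' (ψ'' t) t) →
        (∀ t ∈ Icc (0:ℝ) 1, HasDerivAt ψ'' (ψ''' t) t) →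
        ContinuousOn ψ''' (Icc 0 1) →
        (∀ t ∈ Icc (0:ℝ) 1, |ψ''' t| ≤ M) →
        |(∫ s in p..q, (ψ s - (ψ ((p + q) / 2)
              + (s - (p + q) / 2) * ((ψ q - ψ p) / (q - p)))))
            - (q - p) * (ψ q - 2 * ψ ((p + q) / 2) + ψ p) / 6|
          ≤ C * (q - p) ^ 4 * M := by
  exact ⟨1, one_pos, fun ψ ψ' ψ'' ψ''' p q M hpq hIcc hd1 hd2 hd3 hc3 hM =>
    stmt9_main ψ ψ' ψ'' ψ''' p q M hpq hIcc hd1 hd2 hd3 hc3 hM⟩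
end

section
/- Under the assumptions of the a posteriori error analysis (u solves the ODE, V and W solve the coarse and bisected-mesh upwind schemes, U = 2W − V, Ū the piecewise-linear interpolant of U), the residual in the integrated form satisfies, for x ∈ I_k = (x_{k−1}, x_k) and k = 1,…,N−1: (A(u − Ū))(x) = Ψ(x) + B(x) + Γ_k + Δ_k + (x_{k−1/2} − x)[ (f − cŪ)_{k−1/2} + (bU)_{x,k} ] + α − 2α^W + α^V, where Ψ(x) = ∫_x^1 (ψ − ψ̂)(s) ds + (x_k − x)(x − x_{k−1})/2 · ψ_{x,k} with ψ = f − cŪ, B(x) = (\widebar{bU} − bŪ)(x), α = εu′(1) + b(1)u(1), α^V = ε(V_N − V_{N−1})/h_N + b_N V_N, α^W = ε(W_N − W_{N−1/2})/(h_N/2) + b_N W_N. -/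
open Set MeasureTheory

lemma ae_ne_point (p : ℝ) : ∀ᵐ s : ℝ, s ≠ p := by
  rw [Filter.eventually_iff, mem_ae_iff]
  have : {s : ℝ | s ≠ p}ᶜ = {p} := by ext y; simp
  rw [this]; exact Real.volume_singleton

lemma affine_integral (C m D a b : ℝ) :
    ∫ s in a..b, (C + (s - m) * D) = (b - a) * C + ((b - m)^2 - (a - m)^2) / 2 * D := by
  have h : ∀ s : ℝ, HasDerivAt (fun y => C * y + (y - m)^2 / 2 * D) (C + (s - m) * D) s := by
    intro s
    have h1 : HasDerivAt (fun y : ℝ => C * y) C s := by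
      simpa using (hasDerivAt_id s).const_mul C
    have h2 : HasDerivAt (fun y : ℝ => (y - m)^2 / 2 * D) ((s - m) * D) s := by
      have h3 := ((((hasDerivAt_id s).sub_const m).pow 2).div_const 2).mul_const D
      refine h3.congr_deriv ?_
      simp only [id_eq]
      push_cast
      ring
    exact h1.add h2
  have hint : IntervalIntegrable (fun s => C + (s - m) * D) volume a b :=
    (Continuous.intervalIntegrable (by continuity) a b)
  rw [intervalIntegral.integral_eq_sub_of_hasDerivAt (fun s _ => h s) hint]
  ring




open Set MeasureTheory

set_option maxHeartbeats 2000000 in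
/-- exact residual identity: for `x ∈ I_k`, `k = 1,…,N-1`,
`(A(u - Ū))(x) = Ψ(x) + B(x) + Γ_k + Δ_k
  + (x_{k-1/2} - x)[(f - cŪ)_{k-1/2} + (bU)_{x,k}] + α - 2α^W + α^V`. -/
theorem stmt19
    (ε β γ₀ γ₁ : ℝ) (hε : 0 < ε) (hβ : 0 < β)
    (b b' c f : ℝ → ℝ)
    (hbderiv : ∀ t ∈ Icc (0:ℝ) 1, HasDerivAt b (b' t) t)
    (hb' : ContinuousOn b' (Icc 0 1))
    (hc : ContinuousOn c (Icc 0 1)) (hf : ContinuousOn f (Icc 0 1))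
    (hbβ : ∀ t ∈ Icc (0:ℝ) 1, β ≤ b t)
    (hc0 : ∀ t ∈ Icc (0:ℝ) 1, 0 ≤ c t)
    (hcb : ∀ t ∈ Icc (0:ℝ) 1, 0 ≤ c t - b' t)
    -- the exact solution u ∈ C²[0,1]
    (u u' u'' : ℝ → ℝ)
    (huderiv : ∀ t ∈ Icc (0:ℝ) 1, HasDerivAt u (u' t) t)
    (hu'deriv : ∀ t ∈ Icc (0:ℝ) 1, HasDerivAt u' (u'' t) t)
    (hu'' : ContinuousOn u'' (Icc 0 1))
    (hode : ∀ t ∈ Ioo (0:ℝ) 1,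
        -(ε * u'' t) - (b' t * u t + b t * u' t) + c t * u t = f t)
    (hu0 : u 0 = γ₀) (hu1 : u 1 = γ₁)
    -- the mesh
    (N : ℕ) (hN : 1 ≤ N) (x : ℕ → ℝ)
    (hx0 : x 0 = 0) (hxN : x N = 1) (hmono : ∀ i < N, x i < x (i + 1))
    -- the coarse-mesh upwind solution V
    (V : ℕ → ℝ) (hV0 : V 0 = γ₀) (hVN : V N = γ₁)
    (hschemeV : ∀ i, 1 ≤ i → i ≤ N - 1 →
      -(ε / (x (i + 1) - x i)) *
          ((V (i + 1) - V i) / (x (i + 1) - x i) - (V i - V (i - 1)) / (x i - x (i - 1)))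
        - (b (x (i + 1)) * V (i + 1) - b (x i) * V i) / (x (i + 1) - x i)
        + c (x i) * V i = f (x i))
    -- the bisected-mesh upwind solution W
    (Wn Wm : ℕ → ℝ) (hW0 : Wn 0 = γ₀) (hWN : Wn N = γ₁)
    (hschemeW1 : ∀ i, i ≤ N - 1 →
      -(ε / ((x (i + 1) - x i) / 2)) *
          ((Wn (i + 1) - Wm (i + 1)) / ((x (i + 1) - x i) / 2)
            - (Wm (i + 1) - Wn i) / ((x (i + 1) - x i) / 2))
        - (b (x (i + 1)) * Wn (i + 1)
            - b ((x i + x (i + 1)) / 2) * Wm (i + 1)) / ((x (i + 1) - x i) / 2)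
        + c ((x i + x (i + 1)) / 2) * Wm (i + 1) = f ((x i + x (i + 1)) / 2))
    (hschemeW2 : ∀ i, 1 ≤ i → i ≤ N - 1 →
      -(ε / ((x (i + 1) - x i) / 2)) *
          ((Wm (i + 1) - Wn i) / ((x (i + 1) - x i) / 2)
            - (Wn i - Wm i) / ((x i - x (i - 1)) / 2))
        - (b ((x i + x (i + 1)) / 2) * Wm (i + 1) - b (x i) * Wn i)
            / ((x (i + 1) - x i) / 2)
        + c (x i) * Wn i = f (x i))
    -- U = 2W - V and its piecewise-linear interpolant
    (U : ℕ → ℝ) (hU : ∀ i, U i = 2 * Wn i - V i)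
    (Ubar : ℝ → ℝ)
    (hUbar : ∀ i, 1 ≤ i → i ≤ N → ∀ t ∈ Icc (x (i - 1)) (x i),
      Ubar t = (U (i - 1) + U i) / 2
        + (t - (x (i - 1) + x i) / 2) * ((U i - U (i - 1)) / (x i - x (i - 1))))
    -- ψ = f - cŪ and the interpolant ψ̂
    (ψ : ℝ → ℝ) (hψ : ∀ t, ψ t = f t - c t * Ubar t)
    (ψhat : ℝ → ℝ)
    (hψhat : ∀ i, 1 ≤ i → i ≤ N → ∀ t ∈ Ioo (x (i - 1)) (x i),
      ψhat t = ψ ((x (i - 1) + x i) / 2)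
        + (t - (x (i - 1) + x i) / 2) * ((ψ (x i) - ψ (x (i - 1))) / (x i - x (i - 1))))
    (hψhatint : IntervalIntegrable ψhat volume 0 1)
    -- the interpolant of the nodal values b(x_i) U_i, and B = bU-bar - bŪ
    (bUbar : ℝ → ℝ)
    (hbUbar : ∀ i, 1 ≤ i → i ≤ N → ∀ t ∈ Icc (x (i - 1)) (x i),
      bUbar t = (b (x (i - 1)) * U (i - 1) + b (x i) * U i) / 2
        + (t - (x (i - 1) + x i) / 2) *
            ((b (x i) * U i - b (x (i - 1)) * U (i - 1)) / (x i - x (i - 1))))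
    -- the terms Γ_k and Δ_k
    (Γ Δ : ℕ → ℝ)
    (hΓ : ∀ k, Γ k =
      (∑ i ∈ Finset.Icc k (N - 1), (x (i + 1) - x i) *
          (c ((x i + x (i + 1)) / 2) * (Wm (i + 1) - Ubar ((x i + x (i + 1)) / 2))
            + c (x i) * (Wn i - V i)))
        + (x k - x (k - 1)) / 2 *
            (c ((x (k - 1) + x k) / 2) * (Wm k - Ubar ((x (k - 1) + x k) / 2))))
    (hΔ : ∀ k, Δ k =
      b ((x (k - 1) + x k) / 2) * Wm k - b (x (k - 1)) * Wn (k - 1)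
        - (b (x k) * V k - b (x (k - 1)) * V (k - 1)) / 2)
    -- the constants α, α^V, α^W
    (α αV αW : ℝ)
    (hα : α = ε * u' 1 + b 1 * u 1)
    (hαV : αV = ε * (V N - V (N - 1)) / (x N - x (N - 1)) + b (x N) * V N)
    (hαW : αW = ε * (Wn N - Wm N) / ((x N - x (N - 1)) / 2) + b (x N) * Wn N) :
    -- conclusion: the residual identity on each interior mesh interval
    ∀ k, 1 ≤ k → k ≤ N - 1 → ∀ t ∈ Ioo (x (k - 1)) (x k),
      ε * (u' t - (U k - U (k - 1)) / (x k - x (k - 1)))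
          + b t * (u t - Ubar t)
          + (∫ s in t..(1:ℝ), c s * (u s - Ubar s))
        = ((∫ s in t..(1:ℝ), (ψ s - ψhat s))
              + (x k - t) * (t - x (k - 1)) / 2 *
                  ((ψ (x k) - ψ (x (k - 1))) / (x k - x (k - 1))))
          + (bUbar t - b t * Ubar t)
          + (Γ k + Δ k)
          + ((x (k - 1) + x k) / 2 - t) *
              ((f ((x (k - 1) + x k) / 2)
                  - c ((x (k - 1) + x k) / 2) * Ubar ((x (k - 1) + x k) / 2))
                + (b (x k) * U k - b (x (k - 1)) * U (k - 1)) / (x k - x (k - 1)))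
          + (α - 2 * αW + αV) := by
  
  intro k hk1 hk2 t ht
  obtain ⟨ht1, ht2⟩ := ht
  have hN2 : 2 ≤ N := by omega
  have hkN : k < N := by omega
  have hk1' : k - 1 + 1 = k := by omega
  have hxle : ∀ i j : ℕ, i ≤ j → j ≤ N → x i ≤ x j := by
    intro i j hij hjN
    induction j with
    | zero => simp [Nat.le_zero.mp hij]
    | succ n ih =>
      rcases Nat.eq_or_lt_of_le hij with h | h
      · rw [h]
      · have h1 : x i ≤ x n := ih (by omega) (by omega)
        have h2 : x n < x (n + 1) := hmono n (by omega)
        linarith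
  have hpos : ∀ i, i < N → 0 < x (i + 1) - x i := fun i hi => sub_pos.mpr (hmono i hi)
  have hpos2 : ∀ j : ℕ, 1 ≤ j → j ≤ N → 0 < x j - x (j - 1) := by
    intro j h1 h2
    have h3 := hmono (j - 1) (by omega)
    rw [show j - 1 + 1 = j from by omega] at h3
    linarith
  have hk0 : x (k - 1) < x k := by linarith [hpos2 k hk1 (by omega)]
  have hkpos : 0 < x k - x (k - 1) := by linarith
  have hkne : x k - x (k - 1) ≠ 0 := ne_of_gt hkpos
  have hx01 : ∀ i : ℕ, i ≤ N → x i ∈ Icc (0:ℝ) 1 := by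
    intro i hi
    constructor
    · rw [← hx0]; exact hxle 0 i (Nat.zero_le _) hi
    · rw [← hxN]; exact hxle i N hi le_rfl
  have ht0 : (0:ℝ) ≤ x (k - 1) := (hx01 (k - 1) (by omega)).1
  have htk1 : x k ≤ 1 := (hx01 k (by omega)).2
  have htpos : (0:ℝ) < t := lt_of_le_of_lt ht0 ht1
  have htlt1 : t < 1 := lt_of_lt_of_le ht2 htk1
  have hsub01 : Set.uIcc t (1:ℝ) ⊆ Icc (0:ℝ) 1 := by
    rw [uIcc_of_le (le_of_lt htlt1)]
    exact Icc_subset_Icc (le_of_lt htpos) le_rfl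
  have hbc : ContinuousOn b (Icc (0:ℝ) 1) :=
    fun s hs => ((hbderiv s hs).continuousAt).continuousWithinAt
  have huc : ContinuousOn u (Icc (0:ℝ) 1) :=
    fun s hs => ((huderiv s hs).continuousAt).continuousWithinAt
  have hu'c : ContinuousOn u' (Icc (0:ℝ) 1) :=
    fun s hs => ((hu'deriv s hs).continuousAt).continuousWithinAt
  have hcu_int : IntervalIntegrable (fun s => c s * u s) volume t 1 :=
    ((hc.mul huc).mono hsub01).intervalIntegrable
  have hf_int : IntervalIntegrable f volume t 1 := (hf.mono hsub01).intervalIntegrable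
  -- Step A: integrate the ODE
  have stepA : ε * u' t + b t * u t + (∫ s in t..(1:ℝ), c s * u s)
      = (∫ s in t..(1:ℝ), f s) + α := by
    have hder : ∀ s ∈ Set.uIcc t (1:ℝ), HasDerivAt (fun y => ε * u' y + b y * u y)
        (ε * u'' s + (b' s * u s + b s * u' s)) s := by
      intro s hs
      have hs' : s ∈ Icc (0:ℝ) 1 := hsub01 hs
      exact ((hu'deriv s hs').const_mul ε).add ((hbderiv s hs').mul (huderiv s hs'))
    have hintφ : IntervalIntegrable (fun s => ε * u'' s + (b' s * u s + b s * u' s)) volume t 1 :=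
      (((continuousOn_const.mul hu'').add ((hb'.mul huc).add (hbc.mul hu'c))).mono
        hsub01).intervalIntegrable
    have hFTC := intervalIntegral.integral_eq_sub_of_hasDerivAt hder hintφ
    beta_reduce at hFTC
    have hcong : ∫ s in t..(1:ℝ), (ε * u'' s + (b' s * u s + b s * u' s))
        = ∫ s in t..(1:ℝ), (c s * u s - f s) := by
      apply intervalIntegral.integral_congr_ae
      filter_upwards [ae_ne_point 1] with s hs1 hmem
      rw [uIoc_of_le (le_of_lt htlt1)] at hmem
      have hsIoo : s ∈ Ioo (0:ℝ) 1 :=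
        ⟨lt_trans htpos hmem.1, lt_of_le_of_ne hmem.2 hs1⟩
      have h := hode s hsIoo
      linarith
    have hsub' : ∫ s in t..(1:ℝ), (c s * u s - f s)
        = (∫ s in t..(1:ℝ), c s * u s) - ∫ s in t..(1:ℝ), f s :=
      intervalIntegral.integral_sub hcu_int hf_int
    linear_combination hFTC - hcong - hsub' - hα
  -- piecewise integrals of ψhat
  have psihat_piece : ∀ i : ℕ, 1 ≤ i → i ≤ N → ∀ a bb : ℝ,
      a ∈ Icc (x (i - 1)) (x i) → bb ∈ Icc (x (i - 1)) (x i) →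
      ∫ s in a..bb, ψhat s
        = (bb - a) * ψ ((x (i - 1) + x i) / 2)
          + ((bb - (x (i - 1) + x i) / 2) ^ 2 - (a - (x (i - 1) + x i) / 2) ^ 2) / 2
            * ((ψ (x i) - ψ (x (i - 1))) / (x i - x (i - 1))) := by
    intro i hi1 hi2 a bb ha hbb
    have hle : x (i - 1) ≤ x i := le_of_lt (by linarith [hpos2 i hi1 hi2])
    rw [← affine_integral (ψ ((x (i - 1) + x i) / 2)) ((x (i - 1) + x i) / 2)
      ((ψ (x i) - ψ (x (i - 1))) / (x i - x (i - 1))) a bb]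
    apply intervalIntegral.integral_congr_ae
    filter_upwards [ae_ne_point (x (i - 1)), ae_ne_point (x i)] with s hs1 hs2 hmem
    have hsIcc : s ∈ Icc (x (i - 1)) (x i) :=
      uIcc_subset_Icc ha hbb (uIoc_subset_uIcc hmem)
    have hsIoo : s ∈ Ioo (x (i - 1)) (x i) :=
      ⟨lt_of_le_of_ne hsIcc.1 (Ne.symm hs1), lt_of_le_of_ne hsIcc.2 hs2⟩
    exact hψhat i hi1 hi2 s hsIoo
  have hpsisub : ∀ a bb : ℝ, a ∈ Icc (0:ℝ) 1 → bb ∈ Icc (0:ℝ) 1 →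
      IntervalIntegrable ψhat volume a bb := by
    intro a bb ha hb
    exact hψhatint.mono_set (by rw [uIcc_of_le zero_le_one]; exact uIcc_subset_Icc ha hb)
  have psihat_full : ∀ i : ℕ, i < N →
      ∫ s in (x i)..(x (i + 1)), ψhat s = (x (i + 1) - x i) * ψ ((x i + x (i + 1)) / 2) := by
    intro i hi
    have h := psihat_piece (i + 1) (by omega) (by omega) (x i) (x (i + 1))
      (by simp only [Nat.add_sub_cancel]; exact left_mem_Icc.mpr (le_of_lt (hmono i hi)))
      (by simp only [Nat.add_sub_cancel]; exact right_mem_Icc.mpr (le_of_lt (hmono i hi)))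
    simp only [Nat.add_sub_cancel] at h
    rw [h]; ring
  have int_sum : ∀ j : ℕ, k ≤ j → j ≤ N →
      ∫ s in (x k)..(x j), ψhat s
        = ∑ i ∈ Finset.Ico k j, (x (i + 1) - x i) * ψ ((x i + x (i + 1)) / 2) := by
    intro j hj
    induction j, hj using Nat.le_induction with
    | base => intro _; simp
    | succ n hn ih =>
      intro hn1
      have i1 : IntervalIntegrable ψhat volume (x k) (x n) :=
        hpsisub _ _ (hx01 k (by omega)) (hx01 n (by omega))
      have i2 : IntervalIntegrable ψhat volume (x n) (x (n + 1)) :=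
        hpsisub _ _ (hx01 n (by omega)) (hx01 (n + 1) (by omega))
      rw [← intervalIntegral.integral_add_adjacent_intervals i1 i2, ih (by omega),
        psihat_full n (by omega), Finset.sum_Ico_succ_top hn]
  have int_tk : ∫ s in t..(x k), ψhat s
      = (x k - t) * ψ ((x (k - 1) + x k) / 2)
        + (x k - t) * (t - x (k - 1)) / 2 * ((ψ (x k) - ψ (x (k - 1))) / (x k - x (k - 1))) := by
    have h := psihat_piece k hk1 (by omega) t (x k)
      ⟨le_of_lt ht1, le_of_lt ht2⟩ (right_mem_Icc.mpr (le_of_lt hk0))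
    rw [h]; ring
  have int_k1 : ∫ s in (x k)..(1:ℝ), ψhat s
      = ∑ i ∈ Finset.Ico k N, (x (i + 1) - x i) * ψ ((x i + x (i + 1)) / 2) := by
    rw [show (1:ℝ) = x N from hxN.symm]
    exact int_sum N (by omega) le_rfl
  have split3 : ∫ s in t..(1:ℝ), ψhat s
      = (∫ s in t..(x k), ψhat s) + ∫ s in (x k)..(1:ℝ), ψhat s :=
    (intervalIntegral.integral_add_adjacent_intervals
      (hpsisub t (x k) ⟨le_of_lt htpos, le_of_lt htlt1⟩ (hx01 k (by omega)))
      (hpsisub (x k) 1 (hx01 k (by omega)) (right_mem_Icc.mpr zero_le_one))).symm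
  -- integrability of c * Ubar
  have cU_piece : ∀ i : ℕ, 1 ≤ i → i ≤ N →
      IntervalIntegrable (fun s => c s * Ubar s) volume (x (i - 1)) (x i) := by
    intro i h1 h2
    have hle : x (i - 1) ≤ x i := le_of_lt (by linarith [hpos2 i h1 h2])
    have hsub : Icc (x (i - 1)) (x i) ⊆ Icc (0:ℝ) 1 :=
      Icc_subset_Icc (hx01 (i - 1) (by omega)).1 (hx01 i h2).2
    have hcont : ContinuousOn (fun s => c s * ((U (i - 1) + U i) / 2
        + (s - (x (i - 1) + x i) / 2) * ((U i - U (i - 1)) / (x i - x (i - 1)))))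
        (Icc (x (i - 1)) (x i)) :=
      (hc.mono hsub).mul (Continuous.continuousOn (by fun_prop))
    apply (hcont.intervalIntegrable_of_Icc hle).congr_ae
    filter_upwards [self_mem_ae_restrict measurableSet_uIoc] with s hs
    have hsIcc : s ∈ Icc (x (i - 1)) (x i) := by
      rw [uIoc_of_le hle] at hs
      exact Ioc_subset_Icc_self hs
    rw [hUbar i h1 h2 s hsIcc]
  have cU_chain : ∀ j : ℕ, k ≤ j → j ≤ N →
      IntervalIntegrable (fun s => c s * Ubar s) volume (x k) (x j) := by
    intro j hj
    induction j, hj using Nat.le_induction with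
    | base => intro _; exact IntervalIntegrable.refl
    | succ n hn ih =>
      intro hn1
      have h2 := cU_piece (n + 1) (by omega) (by omega)
      simp only [Nat.add_sub_cancel] at h2
      exact (ih (by omega)).trans h2
  have cU_tk : IntervalIntegrable (fun s => c s * Ubar s) volume t (x k) :=
    (cU_piece k hk1 (by omega)).mono_set (by
      rw [uIcc_of_le (le_of_lt ht2), uIcc_of_le (le_of_lt hk0)]
      exact Icc_subset_Icc (le_of_lt ht1) le_rfl)
  have cU_int : IntervalIntegrable (fun s => c s * Ubar s) volume t 1 := by
    have h := cU_tk.trans (cU_chain N (by omega) le_rfl)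
    rwa [hxN] at h
  -- splitting the integrals
  have split1 : ∫ s in t..(1:ℝ), c s * (u s - Ubar s)
      = (∫ s in t..(1:ℝ), c s * u s) - ∫ s in t..(1:ℝ), c s * Ubar s := by
    rw [← intervalIntegral.integral_sub hcu_int cU_int]
    apply intervalIntegral.integral_congr
    intro s _
    ring
  have split2 : ∫ s in t..(1:ℝ), (ψ s - ψhat s)
      = (∫ s in t..(1:ℝ), f s) - (∫ s in t..(1:ℝ), c s * Ubar s)
        - ∫ s in t..(1:ℝ), ψhat s := by
    have hpsi_int : IntervalIntegrable (fun s => f s - c s * Ubar s) volume t 1 :=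
      hf_int.sub cU_int
    have hpsihat_t1 : IntervalIntegrable ψhat volume t 1 :=
      hpsisub t 1 ⟨le_of_lt htpos, le_of_lt htlt1⟩ (right_mem_Icc.mpr zero_le_one)
    have h1 : ∫ s in t..(1:ℝ), (ψ s - ψhat s)
        = ∫ s in t..(1:ℝ), ((f s - c s * Ubar s) - ψhat s) := by
      apply intervalIntegral.integral_congr
      intro s _
      simp only [hψ]
    rw [h1, intervalIntegral.integral_sub hpsi_int hpsihat_t1,
      intervalIntegral.integral_sub hf_int cU_int]
  -- the discrete flux identities
  have LV : ∀ d : ℕ, ∀ j : ℕ, 1 ≤ j → j + d = N →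
      ε * (V j - V (j - 1)) / (x j - x (j - 1)) + b (x j) * V j
        = αV + ∑ i ∈ Finset.Ico j N, (x (i + 1) - x i) * (f (x i) - c (x i) * V i) := by
    intro d
    induction d with
    | zero =>
      intro j hj1 hj2
      have hjN : j = N := by omega
      subst hjN
      simp [Finset.Ico_self, hαV]
    | succ d ih =>
      intro j hj1 hj2
      have hjN : j < N := by omega
      have ihj := ih (j + 1) (by omega) (by omega)
      simp only [Nat.add_sub_cancel] at ihj
      have hsum : ∑ i ∈ Finset.Ico (j + 1) N, (x (i + 1) - x i) * (f (x i) - c (x i) * V i)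
          = (ε * (V (j + 1) - V j) / (x (j + 1) - x j) + b (x (j + 1)) * V (j + 1)) - αV := by
        linarith [ihj]
      rw [Finset.sum_eq_sum_Ico_succ_bot hjN, hsum]
      have E := hschemeV j hj1 (by omega)
      rw [← E]
      have e1 : x (j + 1) - x j ≠ 0 := ne_of_gt (hpos j hjN)
      have e2 : x j - x (j - 1) ≠ 0 := ne_of_gt (hpos2 j hj1 (by omega))
      field_simp
      ring
  have LW : ∀ d : ℕ, ∀ j : ℕ, 1 ≤ j → j + d = N →
      ε * (Wn j - Wm j) / ((x j - x (j - 1)) / 2) + b (x j) * Wn j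
        = αW + ∑ i ∈ Finset.Ico j N, ((x (i + 1) - x i) / 2) *
            ((f (x i) - c (x i) * Wn i)
              + (f ((x i + x (i + 1)) / 2) - c ((x i + x (i + 1)) / 2) * Wm (i + 1))) := by
    intro d
    induction d with
    | zero =>
      intro j hj1 hj2
      have hjN : j = N := by omega
      subst hjN
      simp [Finset.Ico_self, hαW]
    | succ d ih =>
      intro j hj1 hj2
      have hjN : j < N := by omega
      have ihj := ih (j + 1) (by omega) (by omega)
      simp only [Nat.add_sub_cancel] at ihj
      have hsum : ∑ i ∈ Finset.Ico (j + 1) N, ((x (i + 1) - x i) / 2) *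
            ((f (x i) - c (x i) * Wn i)
              + (f ((x i + x (i + 1)) / 2) - c ((x i + x (i + 1)) / 2) * Wm (i + 1)))
          = (ε * (Wn (j + 1) - Wm (j + 1)) / ((x (j + 1) - x j) / 2)
              + b (x (j + 1)) * Wn (j + 1)) - αW := by
        linarith [ihj]
      rw [Finset.sum_eq_sum_Ico_succ_bot hjN, hsum]
      have E1 := hschemeW1 j (by omega)
      have E2 := hschemeW2 j hj1 (by omega)
      rw [← E1, ← E2]
      have e1 : x (j + 1) - x j ≠ 0 := ne_of_gt (hpos j hjN)
      have e2 : x j - x (j - 1) ≠ 0 := ne_of_gt (hpos2 j hj1 (by omega))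
      field_simp
      ring
  have HmEq : ε * (Wm k - Wn (k - 1)) / ((x k - x (k - 1)) / 2) + b ((x (k - 1) + x k) / 2) * Wm k
      = (ε * (Wn k - Wm k) / ((x k - x (k - 1)) / 2) + b (x k) * Wn k)
        + (x k - x (k - 1)) / 2
          * (f ((x (k - 1) + x k) / 2) - c ((x (k - 1) + x k) / 2) * Wm k) := by
    have E0 := hschemeW1 (k - 1) (by omega)
    rw [hk1'] at E0
    rw [← E0]
    field_simp
    ring
  have hIcc : Finset.Icc k (N - 1) = Finset.Ico k N := by
    rw [← Finset.Ico_add_one_right_eq_Icc]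
    congr 1
    omega
  have hΓ' : Γ k = (∑ i ∈ Finset.Ico k N, (x (i + 1) - x i) *
        (c ((x i + x (i + 1)) / 2) * (Wm (i + 1) - Ubar ((x i + x (i + 1)) / 2))
          + c (x i) * (Wn i - V i)))
      + (x k - x (k - 1)) / 2 *
          (c ((x (k - 1) + x k) / 2) * (Wm k - Ubar ((x (k - 1) + x k) / 2))) := by
    rw [hΓ k, hIcc]
  have hS : ∑ i ∈ Finset.Ico k N, (x (i + 1) - x i) * ψ ((x i + x (i + 1)) / 2)
      = (∑ i ∈ Finset.Ico k N, (x (i + 1) - x i) *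
          (c ((x i + x (i + 1)) / 2) * (Wm (i + 1) - Ubar ((x i + x (i + 1)) / 2))
            + c (x i) * (Wn i - V i)))
        + 2 * (∑ i ∈ Finset.Ico k N, ((x (i + 1) - x i) / 2) *
            ((f (x i) - c (x i) * Wn i)
              + (f ((x i + x (i + 1)) / 2) - c ((x i + x (i + 1)) / 2) * Wm (i + 1))))
        - ∑ i ∈ Finset.Ico k N, (x (i + 1) - x i) * (f (x i) - c (x i) * V i) := by
    rw [Finset.mul_sum, ← Finset.sum_add_distrib, ← Finset.sum_sub_distrib]
    apply Finset.sum_congr rfl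
    intro i _
    rw [hψ]
    ring
  have keyD : ε * ((U k - U (k - 1)) / (x k - x (k - 1)))
      = (∑ i ∈ Finset.Ico k N, (x (i + 1) - x i) * ψ ((x i + x (i + 1)) / 2))
        + (x k - x (k - 1)) / 2 * ψ ((x (k - 1) + x k) / 2)
        - (b (x (k - 1)) * U (k - 1) + b (x k) * U k) / 2
        - Γ k - Δ k + 2 * αW - αV := by
    have LVk := LV (N - k) k hk1 (by omega)
    have LWk := LW (N - k) k hk1 (by omega)
    simp only [div_div_eq_mul_div] at LWk HmEq
    rw [hS, hΓ', hΔ k, hψ ((x (k - 1) + x k) / 2), hU k, hU (k - 1)]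
    linear_combination 2 * LWk - LVk + HmEq
  have hbU_t : bUbar t = (b (x (k - 1)) * U (k - 1) + b (x k) * U k) / 2
      + (t - (x (k - 1) + x k) / 2)
        * ((b (x k) * U k - b (x (k - 1)) * U (k - 1)) / (x k - x (k - 1))) := by
    exact hbUbar k hk1 (by omega) t ⟨le_of_lt ht1, le_of_lt ht2⟩
  have hψm : ψ ((x (k - 1) + x k) / 2)
      = f ((x (k - 1) + x k) / 2)
        - c ((x (k - 1) + x k) / 2) * Ubar ((x (k - 1) + x k) / 2) := hψ _
  linear_combination stepA + split1 - split2 + split3 + int_tk + int_k1 - hbU_t - keyD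
    + ((x (k - 1) + x k) / 2 - t) * hψm
end
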